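/- arXiv:1005.0736 — 10 statements merged into one kernel-verified Lean document; each statement's English description precedes it below -/
import Mathlib

section
/- For every quaternion matrix A of size m × n there exists a quaternion matrix B of size n × m satisfying the four Penrose equations: (A·B)ᴴ = A·B, (B·A)ᴴ = B·A, A·B·A = A, and B·A·B = B. -/
open scoped Quaternion Matrix
open Polynomial

noncomputable instance : StarModule ℝ ℍ[ℝ] :=
  ⟨fun r q => by ext <;> simp⟩

private lemma quat_zzero {a b : ℕ} (Z : Matrix (Fin a) (Fin b) ℍ[ℝ]) (h : Zᴴ * Z = 0) :
    Z = 0 := by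
  refine Matrix.ext fun i j => ?_
  have h1 : (Zᴴ * Z) j j = 0 := by rw [h]; rfl
  rw [Matrix.mul_apply] at h1
  simp only [Matrix.conjTranspose_apply, Quaternion.star_mul_self] at h1
  have h2 : ∑ i, Quaternion.normSq (Z i j) = 0 := by
    apply Quaternion.algebraMap_injective (R := ℝ)
    rw [map_sum, map_zero]
    simpa [Quaternion.algebraMap_def] using h1
  have h3 : Quaternion.normSq (Z i j) = 0 :=
    (Finset.sum_eq_zero_iff_of_nonneg (fun i _ => Quaternion.normSq_nonneg)).mp h2 i
      (Finset.mem_univ i)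
  simpa using Quaternion.normSq_eq_zero.mp h3


private lemma quat_cancel {a b c : ℕ} (A : Matrix (Fin a) (Fin b) ℍ[ℝ])
    (Y : Matrix (Fin b) (Fin c) ℍ[ℝ]) (h : Aᴴ * A * Y = 0) : A * Y = 0 := by
  apply quat_zzero
  have : (A * Y)ᴴ * (A * Y) = Yᴴ * (Aᴴ * A * Y) := by
    simp [Matrix.conjTranspose_mul, Matrix.mul_assoc]
  rw [this, h, Matrix.mul_zero]

private lemma aeval_conjTranspose {n : ℕ} (M : Matrix (Fin n) (Fin n) ℍ[ℝ])
    (hM : Mᴴ = M) (p : ℝ[X]) : (Polynomial.aeval M p)ᴴ = Polynomial.aeval M p := by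
  induction p using Polynomial.induction_on' with
  | add p q hp hq => rw [map_add, Matrix.conjTranspose_add, hp, hq]
  | monomial k a =>
      rw [Polynomial.aeval_monomial, Algebra.algebraMap_eq_smul_one]
      rw [smul_mul_assoc, one_mul, Matrix.conjTranspose_smul, Matrix.conjTranspose_pow, hM,
        star_trivial]

/-- For every quaternion matrix `A` of size `m × n` there exists a quaternion matrix `B` of
size `n × m` satisfying the four Penrose equations. -/
theorem exists_moore_penrose_inverse (m n : ℕ) (A : Matrix (Fin m) (Fin n) ℍ[ℝ]) :
    ∃ B : Matrix (Fin n) (Fin m) ℍ[ℝ],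
      (A * B)ᴴ = A * B ∧ (B * A)ᴴ = B * A ∧ A * B * A = A ∧ B * A * B = B := by
  set M : Matrix (Fin n) (Fin n) ℍ[ℝ] := Aᴴ * A with hMdef
  have hM : Mᴴ = M := by
    rw [hMdef, Matrix.conjTranspose_mul, Matrix.conjTranspose_conjTranspose]
  -- cancellation
  have cancel2 : ∀ Y : Matrix (Fin n) (Fin n) ℍ[ℝ], M * (M * Y) = 0 → M * Y = 0 := by
    intro Y h
    have h1 : A * (M * Y) = 0 := by
      exact quat_cancel A (M * Y) h
    have h2 : (Aᴴ)ᴴ * Aᴴ * (A * Y) = 0 := by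
      rw [Matrix.conjTranspose_conjTranspose]
      calc A * Aᴴ * (A * Y) = A * (Aᴴ * A * Y) := by
            simp [Matrix.mul_assoc]
        _ = A * (M * Y) := by rw [hMdef]
        _ = 0 := h1
    have h3 := quat_cancel Aᴴ (A * Y) h2
    rw [hMdef, Matrix.mul_assoc]
    exact h3
  have cancelPow : ∀ (k : ℕ) (Y : Matrix (Fin n) (Fin n) ℍ[ℝ]), M ^ k * Y = 0 → M * Y = 0 := by
    intro k
    induction k with
    | zero => intro Y h; rw [pow_zero, one_mul] at h; rw [h, Matrix.mul_zero]
    | succ k ih =>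
        intro Y h
        rw [pow_succ, Matrix.mul_assoc] at h
        exact cancel2 Y (ih (M * Y) h)
  -- annihilating polynomial
  obtain ⟨p, hpmonic, hp0⟩ := IsIntegral.of_finite ℝ M
  have hpne : p ≠ 0 := hpmonic.ne_zero
  obtain ⟨q, hq, hqnd⟩ := p.exists_eq_pow_rootMultiplicity_mul_and_not_dvd hpne 0
  rw [C_0, sub_zero] at hq hqnd
  set c : ℝ := q.coeff 0 with hc
  have hcne : c ≠ 0 := fun h => hqnd (Polynomial.X_dvd_iff.mpr h)
  set S : Matrix (Fin n) (Fin n) ℍ[ℝ] := (-c⁻¹) • Polynomial.aeval M q.divX with hSdef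
  -- S is a "polynomial in M"
  have hScomm : M * S = S * M := by
    rw [hSdef, Matrix.mul_smul, Matrix.smul_mul]
    congr 1
    calc M * Polynomial.aeval M q.divX = Polynomial.aeval M (X * q.divX) := by
          rw [map_mul, Polynomial.aeval_X]
      _ = Polynomial.aeval M (q.divX * X) := by rw [mul_comm]
      _ = Polynomial.aeval M q.divX * M := by rw [map_mul, Polynomial.aeval_X]
  have hSherm : Sᴴ = S := by
    rw [hSdef, Matrix.conjTranspose_smul, aeval_conjTranspose M hM, star_trivial]
  -- key identity : M * M * S = M
  have key0 : M ^ (p.rootMultiplicity 0) * (M * S - 1) = 0 := by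
    have h1 : Polynomial.aeval M p = 0 := hp0
    rw [hq, map_mul, map_pow, Polynomial.aeval_X] at h1
    have h2 : Polynomial.aeval M q = algebraMap ℝ _ c + M * Polynomial.aeval M q.divX := by
      conv_lhs => rw [← q.X_mul_divX_add]
      rw [map_add, map_mul, Polynomial.aeval_X, Polynomial.aeval_C, ← hc, add_comm]
    have h3 : M * S - 1 = (-c⁻¹) • Polynomial.aeval M q := by
      rw [h2, smul_add, hSdef, Matrix.mul_smul]
      rw [Algebra.algebraMap_eq_smul_one, smul_smul, neg_mul, inv_mul_cancel₀ hcne]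
      simp [sub_eq_neg_add]
    rw [h3, Matrix.mul_smul, smul_eq_zero]
    right
    rw [h1]
  have key : M * (M * S) = M := by
    have := cancelPow (p.rootMultiplicity 0) (M * S - 1) key0
    rw [Matrix.mul_sub, Matrix.mul_one, sub_eq_zero] at this
    rw [← Matrix.mul_assoc] at this ⊢
    rw [this]
  -- define B
  have hAMS : A * (M * S) = A := by
    have e0 : M * (M * S - 1) = 0 := by
      rw [Matrix.mul_sub, Matrix.mul_one, key, sub_self]
    have e1 : A * (M * S - 1) = 0 := quat_cancel A (M * S - 1) e0
    rw [Matrix.mul_sub, Matrix.mul_one, sub_eq_zero] at e1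
    exact e1
  have hMSA : M * S * Aᴴ = Aᴴ := by
    have := congrArg Matrix.conjTranspose hAMS
    rw [Matrix.conjTranspose_mul, Matrix.conjTranspose_mul, hSherm, hM] at this
    rw [hScomm]
    exact this
  refine ⟨S * Aᴴ, ?_, ?_, ?_, ?_⟩
  · simp [Matrix.conjTranspose_mul, hSherm, Matrix.mul_assoc]
  · have e2 : S * Aᴴ * A = S * M := by rw [Matrix.mul_assoc, ← hMdef]
    rw [e2, Matrix.conjTranspose_mul, hSherm, hM, ← hScomm, hScomm]
  · calc A * (S * Aᴴ) * A = A * (S * (Aᴴ * A)) := by simp [Matrix.mul_assoc]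
      _ = A * (S * M) := by rw [← hMdef]
      _ = A * (M * S) := by rw [hScomm]
      _ = A := hAMS
  · calc S * Aᴴ * A * (S * Aᴴ) = S * ((Aᴴ * A) * (S * Aᴴ)) := by simp [Matrix.mul_assoc]
      _ = S * (M * S * Aᴴ) := by simp [hMdef, Matrix.mul_assoc]
      _ = S * Aᴴ := by rw [hMSA]
end

section
/- Let A ∈ ℍ^{m×n} be a quaternion matrix and let B ∈ ℍ^{n×m} satisfy the four Penrose equations for A. Then B = lim_{α→0⁺} Aᴴ·(A·Aᴴ + α·I)⁻¹, i.e. the function α ↦ Aᴴ·(A·Aᴴ + α·I)⁻¹ (using the ring inverse of the invertible matrix A·Aᴴ + α·I in ℍ^{m×m}) tends to B as α tends to 0 from the right within the positive reals. -/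
open scoped Quaternion Matrix
open Matrix Filter

attribute [local instance] Matrix.linftyOpNormedRing Matrix.linftyOpNormedAddCommGroup
  Matrix.linftyOpNormedSpace

instance inst_s4 : StarModule ℝ ℍ[ℝ] :=
  ⟨fun r x => by simp [Quaternion.star_smul]⟩

lemma qcoe_sum {ι : Type*} (s : Finset ι) (f : ι → ℝ) :
    ((∑ i ∈ s, f i : ℝ) : ℍ[ℝ]) = ∑ i ∈ s, (f i : ℍ[ℝ]) := by
  induction s using Finset.cons_induction with
  | empty => simp
  | cons a s ha ih => rw [Finset.sum_cons, Finset.sum_cons, Quaternion.coe_add, ih]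

lemma mp_isUnit (m n : ℕ) (A : Matrix (Fin m) (Fin n) ℍ[ℝ]) {α : ℝ} (hα : 0 < α) :
    IsUnit (A * Aᴴ + α • (1 : Matrix (Fin m) (Fin m) ℍ[ℝ])) := by
  set M := A * Aᴴ + α • (1 : Matrix (Fin m) (Fin m) ℍ[ℝ]) with hM
  have hMh : Mᴴ = M := by
    rw [hM, conjTranspose_add, conjTranspose_mul, conjTranspose_conjTranspose,
      conjTranspose_smul, conjTranspose_one, star_trivial]
  have hinj : ∀ v : Fin m → ℍ[ℝ], M *ᵥ v = 0 → v = 0 := by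
    intro v hv
    have h1 : star v ⬝ᵥ (M *ᵥ v) = 0 := by rw [hv, dotProduct_zero]
    have h2 : M *ᵥ v = A *ᵥ (Aᴴ *ᵥ v) + α • v := by
      rw [hM, add_mulVec, ← mulVec_mulVec, smul_mulVec, one_mulVec]
    set w := Aᴴ *ᵥ v with hw
    have h3 : star v ⬝ᵥ (A *ᵥ w) = star w ⬝ᵥ w := by
      rw [dotProduct_mulVec]
      congr 1
      rw [hw, star_mulVec, conjTranspose_conjTranspose]
    have h4 : star w ⬝ᵥ w = ((∑ j, Quaternion.normSq (w j) : ℝ) : ℍ[ℝ]) := by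
      rw [dotProduct, qcoe_sum]
      exact Finset.sum_congr rfl fun j _ => Quaternion.star_mul_self (w j)
    have h5 : star v ⬝ᵥ v = ((∑ i, Quaternion.normSq (v i) : ℝ) : ℍ[ℝ]) := by
      rw [dotProduct, qcoe_sum]
      exact Finset.sum_congr rfl fun i _ => Quaternion.star_mul_self (v i)
    have h6 : (∑ j, Quaternion.normSq (w j)) + α * ∑ i, Quaternion.normSq (v i) = 0 := by
      apply Quaternion.coe_injective
      rw [Quaternion.coe_add, ← Quaternion.smul_coe, ← h4, ← h5, Quaternion.coe_zero, ← h3]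
      rw [h2, dotProduct_add, dotProduct_smul] at h1
      exact h1
    have hw0 : (0:ℝ) ≤ ∑ j, Quaternion.normSq (w j) :=
      Finset.sum_nonneg fun _ _ => Quaternion.normSq_nonneg
    have hv0 : (0:ℝ) ≤ ∑ i, Quaternion.normSq (v i) :=
      Finset.sum_nonneg fun _ _ => Quaternion.normSq_nonneg
    have hvsum : (∑ i, Quaternion.normSq (v i)) = 0 := by nlinarith
    funext i
    have := (Finset.sum_eq_zero_iff_of_nonneg
      (fun i _ => Quaternion.normSq_nonneg)).mp hvsum i (Finset.mem_univ i)
    exact Quaternion.normSq_eq_zero.mp this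
  let f : (Fin m → ℍ[ℝ]) →ₗ[ℝ] (Fin m → ℍ[ℝ]) :=
    { toFun := M.mulVec
      map_add' := fun x y => M.mulVec_add x y
      map_smul' := fun r x => M.mulVec_smul r x }
  have hfinj : Function.Injective f := by
    rw [injective_iff_map_eq_zero]
    exact fun v hv => hinj v hv
  have hfsurj : Function.Surjective f := LinearMap.injective_iff_surjective.mp hfinj
  choose c hc using fun j : Fin m => hfsurj (Pi.single j 1)
  have hc' : ∀ j, M *ᵥ c j = Pi.single j 1 := hc
  let N : Matrix (Fin m) (Fin m) ℍ[ℝ] := Matrix.of fun i j => c j i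
  have hMN : M * N = 1 := by
    apply Matrix.ext
    intro i j
    have h := congrFun (hc' j) i
    simp only [Matrix.mulVec, dotProduct, Pi.single_apply] at h
    simp only [Matrix.mul_apply, N, Matrix.of_apply, Matrix.one_apply]
    exact h
  have hNM : Nᴴ * M = 1 := by
    have h := congrArg conjTranspose hMN
    rwa [conjTranspose_mul, hMh, conjTranspose_one] at h
  have hNh : Nᴴ = N := by
    calc Nᴴ = Nᴴ * (M * N) := by rw [hMN, mul_one]
    _ = (Nᴴ * M) * N := by rw [mul_assoc]
    _ = N := by rw [hNM, one_mul]
  exact ⟨⟨M, N, hMN, by rw [← hNh, hNM]⟩, rfl⟩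

/-- Limit representation of the Moore–Penrose inverse:
`A⁺ = lim_{α→0⁺} Aᴴ·(A·Aᴴ + α·I)⁻¹`. -/

theorem moore_penrose_limit_right (m n : ℕ) (A : Matrix (Fin m) (Fin n) ℍ[ℝ])
    (B : Matrix (Fin n) (Fin m) ℍ[ℝ])
    (hB1 : (A * B)ᴴ = A * B) (hB2 : (B * A)ᴴ = B * A)
    (hB3 : A * B * A = A) (hB4 : B * A * B = B) :
    Filter.Tendsto
      (fun α : ℝ =>
        Aᴴ * Ring.inverse (A * Aᴴ + α • (1 : Matrix (Fin m) (Fin m) ℍ[ℝ])))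
      (nhdsWithin 0 (Set.Ioi 0)) (nhds B) := by
  have hBAA : B * A * Aᴴ = Aᴴ := by
    have h : (A * (B * A))ᴴ = (B * A)ᴴ * Aᴴ := conjTranspose_mul _ _
    rw [hB2] at h
    rw [← h, ← Matrix.mul_assoc, hB3]
  have hBBA : B * Bᴴ * Aᴴ = B := by
    have h : (A * B)ᴴ = Bᴴ * Aᴴ := conjTranspose_mul _ _
    rw [hB1] at h
    rw [Matrix.mul_assoc, ← h, ← Matrix.mul_assoc, hB4]
  set E : ℝ → Matrix (Fin n) (Fin m) ℍ[ℝ] := fun α =>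
    α • (B * Ring.inverse (A * Aᴴ + α • (1 : Matrix (Fin m) (Fin m) ℍ[ℝ]))) with hE
  have hkey : ∀ α : ℝ, 0 < α →
      Aᴴ * Ring.inverse (A * Aᴴ + α • (1 : Matrix (Fin m) (Fin m) ℍ[ℝ])) = B - E α := by
    intro α hα
    have hu := mp_isUnit m n A hα
    set M := A * Aᴴ + α • (1 : Matrix (Fin m) (Fin m) ℍ[ℝ]) with hM
    have h1 : B * M = Aᴴ + α • B := by
      rw [hM, Matrix.mul_add, ← Matrix.mul_assoc, hBAA, Matrix.mul_smul, Matrix.mul_one]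
    have h2 : B * (M * Ring.inverse M) = (Aᴴ + α • B) * Ring.inverse M := by
      rw [← Matrix.mul_assoc, h1]
    rw [Ring.mul_inverse_cancel _ hu, Matrix.mul_one, Matrix.add_mul, Matrix.smul_mul] at h2
    have hEα : E α = α • (B * Ring.inverse M) := rfl
    rw [hEα]
    exact eq_sub_iff_add_eq.mpr h2.symm
  obtain ⟨C1, hC1⟩ : ∃ C1 : ℝ, ‖B * Bᴴ * B‖ = C1 := ⟨_, rfl⟩
  obtain ⟨C2, hC2e⟩ : ∃ C2 : ℝ, ‖B * Bᴴ‖ = C2 := ⟨_, rfl⟩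
  have hC2 : (0:ℝ) ≤ C2 := hC2e ▸ norm_nonneg _
  have hEbound : ∀ α : ℝ, 0 < α → α * C2 ≤ 1/2 →
      ‖E α‖ ≤ α * (2 * C1) := by
    intro α hα hsmall
    have h4 : B * Ring.inverse (A * Aᴴ + α • (1 : Matrix (Fin m) (Fin m) ℍ[ℝ]))
        = B * Bᴴ * B - B * Bᴴ * E α := by
      conv_lhs => rw [← hBBA]
      rw [Matrix.mul_assoc, hkey α hα, Matrix.mul_sub]
    have hEα : E α = α • (B * Ring.inverse (A * Aᴴ + α • (1 : Matrix (Fin m) (Fin m) ℍ[ℝ]))) := rfl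
    have h5 : E α = α • (B * Bᴴ * B) - α • (B * Bᴴ * E α) := by
      conv_lhs => rw [hEα, h4]
      rw [smul_sub]
    obtain ⟨x, hx⟩ : ∃ x : ℝ, ‖E α‖ = x := ⟨_, rfl⟩
    have hEn : (0:ℝ) ≤ x := hx ▸ norm_nonneg _
    rw [hx]
    have h6 : x ≤ α * C1 + α * (C2 * x) := by
      rw [← hx, ← hC1, ← hC2e]
      calc ‖E α‖ = ‖α • (B * Bᴴ * B) - α • (B * Bᴴ * E α)‖ := congrArg (‖·‖) h5
      _ ≤ ‖α • (B * Bᴴ * B)‖ + ‖α • (B * Bᴴ * E α)‖ := norm_sub_le _ _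
      _ = α * ‖B * Bᴴ * B‖ + α * ‖B * Bᴴ * E α‖ := by
          rw [norm_smul, norm_smul, Real.norm_of_nonneg hα.le]
      _ ≤ α * ‖B * Bᴴ * B‖ + α * (‖B * Bᴴ‖ * ‖E α‖) := by
          have h7 := Matrix.linfty_opNorm_mul (B * Bᴴ) (E α)
          exact add_le_add (le_refl _) (mul_le_mul_of_nonneg_left h7 hα.le)
    have h8 := mul_le_mul_of_nonneg_right hsmall hEn
    have h9 : α * (C2 * x) = α * C2 * x := (mul_assoc _ _ _).symm
    linarith
  have hδ : (0:ℝ) < (1/2) / (C2 + 1) := by positivity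
  have hev : ∀ᶠ α in nhdsWithin (0:ℝ) (Set.Ioi 0),
      ‖E α‖ ≤ α * (2 * C1) := by
    filter_upwards [Ioo_mem_nhdsGT_of_mem (Set.left_mem_Ico.mpr hδ)] with α hα
    refine hEbound α hα.1 ?_
    have h1 : α * (C2 + 1) ≤ (1/2) / (C2 + 1) * (C2 + 1) := by
      gcongr
      exact hα.2.le
    rw [div_mul_cancel₀] at h1
    · nlinarith [hα.1]
    · positivity
  have hE0 : Tendsto E (nhdsWithin (0:ℝ) (Set.Ioi 0)) (nhds 0) := by
    refine squeeze_zero_norm' hev ?_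
    have h : Filter.Tendsto (fun α : ℝ => α * (2 * C1)) (nhds (0:ℝ)) (nhds (0 * (2 * C1))) :=
      (continuous_mul_right _).tendsto 0
    rw [zero_mul] at h
    exact h.mono_left nhdsWithin_le_nhds
  have hfin : Tendsto (fun α => B - E α) (nhdsWithin (0:ℝ) (Set.Ioi 0)) (nhds B) := by
    have h := (tendsto_const_nhds (x := B) (f := nhdsWithin (0:ℝ) (Set.Ioi 0))).sub hE0
    simpa using h
  refine hfin.congr' ?_
  filter_upwards [self_mem_nhdsWithin] with α hα
  exact (hkey α hα).symm
end

section
/- Let A ∈ ℍ^{m×n} be a quaternion matrix and let B ∈ ℍ^{n×m} satisfy the four Penrose equations for A. Then B = lim_{α→0⁺} (AᴴA + α·I)⁻¹·Aᴴ, i.e. the function α ↦ (AᴴA + α·I)⁻¹·Aᴴ (using the ring inverse of the invertible matrix AᴴA + α·I in ℍ^{n×n}) tends to B as α tends to 0 from the right within the positive reals. -/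
open scoped Quaternion Matrix

attribute [local instance] Matrix.linftyOpNormedRing Matrix.linftyOpNormedAlgebra

open Matrix in
/-- `AᴴA + αI` is invertible for `α > 0`. -/
lemma mp_aux_isUnit {m n : ℕ} (A : Matrix (Fin m) (Fin n) ℍ[ℝ]) {α : ℝ} (hα : 0 < α) :
    IsUnit (Aᴴ * A + α • (1 : Matrix (Fin n) (Fin n) ℍ[ℝ])) := by
  set M : Matrix (Fin n) (Fin n) ℍ[ℝ] := Aᴴ * A + α • 1 with hMdef
  have hsm1 : (α • (1 : Matrix (Fin n) (Fin n) ℍ[ℝ]))ᴴ = α • 1 := by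
    refine Matrix.ext fun i j => ?_
    by_cases h : i = j
    · subst h; simp [conjTranspose_apply, Matrix.one_apply, star_smul]
    · simp [conjTranspose_apply, Matrix.one_apply, h, Ne.symm h]
  have hM : Mᴴ = M := by
    rw [hMdef, conjTranspose_add, conjTranspose_mul, conjTranspose_conjTranspose, hsm1]
  -- key: M *ᵥ x = 0 → x = 0
  have key : ∀ x : Fin n → ℍ[ℝ], M *ᵥ x = 0 → x = 0 := by
    intro x hx
    have h0 : star x ⬝ᵥ (M *ᵥ x) = 0 := by rw [hx, dotProduct_zero]
    rw [hMdef, add_mulVec, ← mulVec_mulVec, smul_mulVec, one_mulVec,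
      dotProduct_add, dotProduct_mulVec, ← star_mulVec, dotProduct_smul] at h0
    set y := A *ᵥ x with hy
    have hdot : ∀ {k : ℕ} (z : Fin k → ℍ[ℝ]),
        star z ⬝ᵥ z = ((∑ i, Quaternion.normSq (z i) : ℝ) : ℍ[ℝ]) := by
      intro k z
      rw [show ((∑ i, Quaternion.normSq (z i) : ℝ) : ℍ[ℝ])
          = algebraMap ℝ ℍ[ℝ] (∑ i, Quaternion.normSq (z i)) from rfl, map_sum,
        dotProduct]
      exact Finset.sum_congr rfl fun i _ => by
        rw [Pi.star_apply, Quaternion.star_mul_self]; rfl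
    rw [hdot, hdot] at h0
    have hre : (∑ i, Quaternion.normSq (y i)) + α * (∑ i, Quaternion.normSq (x i)) = 0 := by
      have := congrArg QuaternionAlgebra.re h0
      simpa [Quaternion.re_smul] using this
    have h1 : (0:ℝ) ≤ ∑ i, Quaternion.normSq (y i) :=
      Finset.sum_nonneg fun i _ => Quaternion.normSq_nonneg
    have h2 : (0:ℝ) ≤ ∑ i, Quaternion.normSq (x i) :=
      Finset.sum_nonneg fun i _ => Quaternion.normSq_nonneg
    have hx0 : (∑ i, Quaternion.normSq (x i)) = 0 := by nlinarith
    funext i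
    have := (Finset.sum_eq_zero_iff_of_nonneg
      (fun i _ => Quaternion.normSq_nonneg)).mp hx0 i (Finset.mem_univ i)
    exact Quaternion.normSq_eq_zero.mp this
  -- vecMul injective
  have hvinj : Function.Injective M.vecMulLinear := by
    rw [injective_iff_map_eq_zero]
    intro x hx
    have hx' : x ᵥ* M = 0 := hx
    have : M *ᵥ star x = 0 := by
      rw [← hM, ← star_vecMul, hx', star_zero]
    have := key _ this
    simpa using congrArg star this
  have hvsurj : Function.Surjective M.vecMul :=
    LinearMap.injective_iff_surjective.mp hvinj
  obtain ⟨N, hN⟩ := vecMul_surjective_iff_exists_left_inverse.mp hvsurj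
  have hmsurj : Function.Surjective M.mulVec := by
    intro v
    obtain ⟨z, hz⟩ := hvsurj (star v)
    refine ⟨star z, ?_⟩
    rw [← hM, ← star_vecMul, show z ᵥ* M = star v from hz, star_star]
  obtain ⟨N', hN'⟩ := mulVec_surjective_iff_exists_right_inverse.mp hmsurj
  have : N = N' := by
    calc N = N * (M * N') := by rw [hN', mul_one]
    _ = (N * M) * N' := by rw [mul_assoc]
    _ = N' := by rw [hN, one_mul]
  exact ⟨⟨M, N, by rw [this]; exact hN', hN⟩, rfl⟩

/-- Limit representation of the Moore–Penrose inverse: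
`A⁺ = lim_{α→0⁺} (AᴴA + α·I)⁻¹·Aᴴ`. -/
theorem moore_penrose_limit_left (m n : ℕ) (A : Matrix (Fin m) (Fin n) ℍ[ℝ])
    (B : Matrix (Fin n) (Fin m) ℍ[ℝ])
    (hB1 : (A * B)ᴴ = A * B) (hB2 : (B * A)ᴴ = B * A)
    (hB3 : A * B * A = A) (hB4 : B * A * B = B) :
    Filter.Tendsto
      (fun α : ℝ =>
        Ring.inverse (Aᴴ * A + α • (1 : Matrix (Fin n) (Fin n) ℍ[ℝ])) * Aᴴ)
      (nhdsWithin 0 (Set.Ioi 0)) (nhds B) := by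
  classical
  set C : Matrix (Fin m) (Fin m) ℍ[ℝ] := Bᴴ * B with hC
  have hAAB : Aᴴ = Aᴴ * A * B := by
    conv_lhs => rw [← hB3]
    rw [Matrix.conjTranspose_mul, hB1, ← Matrix.mul_assoc]
  have hBC : B = Aᴴ * C := by
    conv_lhs => rw [← hB4, ← hB2, Matrix.conjTranspose_mul, Matrix.mul_assoc]
  -- the comparison function
  set g : ℝ → Matrix (Fin n) (Fin m) ℍ[ℝ] :=
    fun α => B * Ring.inverse ((1 : Matrix (Fin m) (Fin m) ℍ[ℝ]) + α • C) with hg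
  have hgcont : Filter.Tendsto g (nhdsWithin 0 (Set.Ioi 0)) (nhds B) := by
    have h1 : ContinuousAt (fun α : ℝ => (1 : Matrix (Fin m) (Fin m) ℍ[ℝ]) + α • C) 0 := by
      fun_prop
    have h2 : ContinuousAt Ring.inverse ((1 : Matrix (Fin m) (Fin m) ℍ[ℝ])) :=
      NormedRing.inverse_continuousAt (1 : (Matrix (Fin m) (Fin m) ℍ[ℝ])ˣ)
    have h2' : ContinuousAt Ring.inverse
        ((1 : Matrix (Fin m) (Fin m) ℍ[ℝ]) + (0:ℝ) • C) := by simpa using h2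
    have h3' : ContinuousAt
        (fun α : ℝ => Ring.inverse ((1 : Matrix (Fin m) (Fin m) ℍ[ℝ]) + α • C)) 0 :=
      ContinuousAt.comp (g := Ring.inverse) h2' h1
    have h3 : ContinuousAt g 0 := by
      have hmul : Continuous (fun X : Matrix (Fin m) (Fin m) ℍ[ℝ] => B * X) :=
        Continuous.matrix_mul continuous_const continuous_id
      rw [hg]
      exact ContinuousAt.comp (g := fun X => B * X) hmul.continuousAt h3'
    have h4 : g 0 = B := by simp [hg]
    simpa [h4] using (h3.continuousWithinAt (s := Set.Ioi 0)).tendsto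
  refine hgcont.congr' ?_
  have hε : (0:ℝ) < (‖C‖ + 1)⁻¹ := by positivity
  filter_upwards [Ioo_mem_nhdsGT_of_mem (Set.mem_Ico.mpr ⟨le_refl (0:ℝ), hε⟩)] with α hα
  have hαpos : (0:ℝ) < α := hα.1
  have hUnit1 : IsUnit ((1 : Matrix (Fin m) (Fin m) ℍ[ℝ]) + α • C) := by
    have hnorm : ‖-(α • C)‖ < 1 := by
      rw [norm_neg, norm_smul, Real.norm_eq_abs, abs_of_pos hαpos]
      calc α * ‖C‖ ≤ α * (‖C‖ + 1) := by nlinarith [norm_nonneg C]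
      _ < (‖C‖ + 1)⁻¹ * (‖C‖ + 1) := by
          apply mul_lt_mul_of_pos_right hα.2
          positivity
      _ = 1 := by field_simp
    simpa [sub_neg_eq_add] using isUnit_one_sub_of_norm_lt_one hnorm
  have hUnitM := mp_aux_isUnit A hαpos
  set M : Matrix (Fin n) (Fin n) ℍ[ℝ] := Aᴴ * A + α • 1 with hMdef
  set F : Matrix (Fin n) (Fin m) ℍ[ℝ] := Ring.inverse M * Aᴴ with hF
  have hRM : Ring.inverse M * M = 1 := Ring.inverse_mul_cancel _ hUnitM
  have h5 : F = B - α • (F * C) := by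
    calc F = Ring.inverse M * (Aᴴ * A * B) := by rw [hF, ← hAAB]
    _ = Ring.inverse M * ((M - α • 1) * B) := by rw [hMdef, add_sub_cancel_right]
    _ = Ring.inverse M * (M * B) - α • (Ring.inverse M * B) := by
        rw [Matrix.sub_mul, Matrix.mul_sub, Matrix.smul_mul, Matrix.mul_smul,
          Matrix.one_mul]
    _ = B - α • (Ring.inverse M * (Aᴴ * C)) := by
        rw [← Matrix.mul_assoc, hRM, Matrix.one_mul, ← hBC]
    _ = B - α • (F * C) := by rw [← Matrix.mul_assoc, ← hF]
  have h6 : F * (1 + α • C) = B := by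
    rw [Matrix.mul_add, Matrix.mul_one, Matrix.mul_smul]
    nth_rewrite 1 [h5]
    abel
  have h7 : g α = F := by
    calc g α = (F * (1 + α • C)) * Ring.inverse (1 + α • C) := by rw [hg, h6]
    _ = F * ((1 + α • C) * Ring.inverse (1 + α • C)) := by rw [Matrix.mul_assoc]
    _ = F := by rw [Ring.mul_inverse_cancel _ hUnit1, Matrix.mul_one]
  rw [h7, hF, hMdef]
end

section
/- Let A ∈ ℍ^{m×n} be a quaternion matrix, let B ∈ ℍ^{n×m} satisfy the four Penrose equations for A, and let y ∈ ℍ^m. Set x⁰ = B·y (matrix–vector product). Then for every x ∈ ℍ^n, ‖A·x⁰ − y‖ ≤ ‖A·x − y‖, where ‖v‖ = √(Σᵢ |vᵢ|²) is the ℓ²-norm of a quaternion vector. That is, x⁰ = B·y minimizes ‖A·x − y‖ over all x ∈ ℍ^n. -/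
open scoped Quaternion Matrix

open Quaternion in
lemma quat_re_mul_comm (a b : ℍ[ℝ]) : (a * b).re = (b * a).re := by
  simp only [Quaternion.re_mul]; ring

open Quaternion in
lemma quat_norm_sq_eq (a : ℍ[ℝ]) : ‖a‖ ^ 2 = normSq a := by
  rw [sq, ← normSq_eq_norm_mul_self]

lemma quat_re_sum {ι : Type*} (s : Finset ι) (f : ι → ℍ[ℝ]) :
    (∑ j ∈ s, f j).re = ∑ j ∈ s, (f j).re :=
  map_sum (QuaternionAlgebra.reₗ (-1 : ℝ) (0 : ℝ) (-1 : ℝ)) f s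

/-- `x⁰ = A⁺·y` is a least squares solution of the right system `A·x = y`: it minimizes the
ℓ²-norm of the residual `A·x − y` over all quaternion vectors `x`. -/
theorem moore_penrose_least_squares_right (m n : ℕ) (A : Matrix (Fin m) (Fin n) ℍ[ℝ])
    (B : Matrix (Fin n) (Fin m) ℍ[ℝ])
    (hB1 : (A * B)ᴴ = A * B) (hB2 : (B * A)ᴴ = B * A)
    (hB3 : A * B * A = A) (hB4 : B * A * B = B)
    (y : Fin m → ℍ[ℝ]) :
    ∀ x : Fin n → ℍ[ℝ],
      Real.sqrt (∑ i, ‖A.mulVec (B.mulVec y) i - y i‖ ^ 2) ≤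
        Real.sqrt (∑ i, ‖A.mulVec x i - y i‖ ^ 2) := by
  intro x
  apply Real.sqrt_le_sqrt
  set w : Fin m → ℍ[ℝ] := A.mulVec (B.mulVec y) - y with hw
  set v : Fin n → ℍ[ℝ] := x - B.mulVec y with hv
  -- key matrix identity: Aᴴ * (A * B) = Aᴴ
  have hkey : Aᴴ * (A * B) = Aᴴ := by
    conv_lhs => rw [← hB1, ← Matrix.conjTranspose_mul, hB3]
  have hAw : Aᴴ.mulVec w = 0 := by
    rw [hw, Matrix.mulVec_sub, Matrix.mulVec_mulVec, Matrix.mulVec_mulVec,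
      Matrix.mul_assoc, hkey]
    simp
  -- the cross term vanishes
  have hcross : ∑ i, (A.mulVec v i * star (w i)).re = 0 := by
    have h1 : ∀ i, (A.mulVec v i * star (w i)).re
        = ∑ j, (v j * star (star (A i j) * w i)).re := by
      intro i
      rw [Matrix.mulVec, dotProduct, Finset.sum_mul, quat_re_sum]
      refine Finset.sum_congr rfl fun j _ => ?_
      calc (A i j * v j * star (w i)).re
          = (v j * (star (w i) * A i j)).re := by
            rw [mul_assoc, quat_re_mul_comm, mul_assoc]
        _ = (v j * star (star (A i j) * w i)).re := by
            rw [star_mul, star_star]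
    simp_rw [h1]
    rw [Finset.sum_comm]
    have h2 : ∀ j, ∑ i, (v j * star (star (A i j) * w i)).re
        = (v j * star (Aᴴ.mulVec w j)).re := by
      intro j
      rw [Matrix.mulVec, dotProduct]
      simp_rw [Matrix.conjTranspose_apply, star_sum, Finset.mul_sum, quat_re_sum]
    simp_rw [h2, hAw]
    simp
  have hsplit : ∀ i, A.mulVec x i - y i = A.mulVec v i + w i := by
    intro i
    rw [hv, hw, Matrix.mulVec_sub]
    simp [sub_eq_add_neg]
  calc ∑ i, ‖A.mulVec (B.mulVec y) i - y i‖ ^ 2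
      = ∑ i, ‖w i‖ ^ 2 := by rw [hw]; simp
    _ ≤ ∑ i, ‖A.mulVec v i‖ ^ 2 + ∑ i, ‖w i‖ ^ 2 := by
        have : (0:ℝ) ≤ ∑ i, ‖A.mulVec v i‖ ^ 2 :=
          Finset.sum_nonneg fun i _ => sq_nonneg _
        linarith
    _ = ∑ i, ‖A.mulVec x i - y i‖ ^ 2 := by
        simp_rw [hsplit, quat_norm_sq_eq, Quaternion.normSq_add]
        rw [Finset.sum_add_distrib, Finset.sum_add_distrib, ← Finset.mul_sum, hcross]
        ring
end

section
/- Let A ∈ ℍ^{m×n} be a quaternion matrix, let B ∈ ℍ^{n×m} satisfy the four Penrose equations for A, and let y ∈ ℍ^m. Set x⁰ = B·y. Then among all least squares solutions of A·x = y, x⁰ has least norm: for every x ∈ ℍ^n with ‖A·x − y‖ = ‖A·x⁰ − y‖, one has ‖x⁰‖ ≤ ‖x‖, where ‖v‖ = √(Σᵢ |vᵢ|²) is the ℓ²-norm of a quaternion vector. -/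
open scoped Quaternion Matrix

private lemma re_sum {α : Type*} (s : Finset α) (f : α → ℍ[ℝ]) :
    (∑ x ∈ s, f x).re = ∑ x ∈ s, (f x).re :=
  map_sum (QuaternionAlgebra.reₗ _ _ _) f s

private noncomputable def qip {k : ℕ} (u v : Fin k → ℍ[ℝ]) : ℝ :=
  ∑ i, (star (u i) * v i).re

private lemma qip_self {k : ℕ} (v : Fin k → ℍ[ℝ]) : qip v v = ∑ i, ‖v i‖ ^ 2 := by
  unfold qip
  refine Finset.sum_congr rfl fun i _ => ?_
  rw [Quaternion.star_mul_self, Quaternion.re_coe, Quaternion.normSq_eq_norm_mul_self, sq]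

private lemma qip_symm {k : ℕ} (u v : Fin k → ℍ[ℝ]) : qip u v = qip v u := by
  unfold qip
  refine Finset.sum_congr rfl fun i _ => ?_
  have : star (u i) * v i = star (star (v i) * u i) := by simp
  rw [this, Quaternion.re_star]

private lemma qip_add_right {k : ℕ} (u v w : Fin k → ℍ[ℝ]) :
    qip u (v + w) = qip u v + qip u w := by
  unfold qip
  rw [← Finset.sum_add_distrib]
  refine Finset.sum_congr rfl fun i _ => ?_
  simp [mul_add]

private lemma qip_add_left {k : ℕ} (u v w : Fin k → ℍ[ℝ]) :
    qip (u + v) w = qip u w + qip v w := by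
  rw [qip_symm, qip_add_right, qip_symm w u, qip_symm w v]

private lemma qip_zero_right {k : ℕ} (u : Fin k → ℍ[ℝ]) : qip u 0 = 0 := by
  unfold qip; simp

private lemma qip_self_nonneg {k : ℕ} (v : Fin k → ℍ[ℝ]) : 0 ≤ qip v v := by
  rw [qip_self]; exact Finset.sum_nonneg fun i _ => sq_nonneg _

private lemma qip_adjoint {k l : ℕ} (M : Matrix (Fin k) (Fin l) ℍ[ℝ])
    (u : Fin l → ℍ[ℝ]) (v : Fin k → ℍ[ℝ]) :
    qip (M.mulVec u) v = qip u (Mᴴ.mulVec v) := by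
  unfold qip
  simp only [Matrix.mulVec, dotProduct, Matrix.conjTranspose_apply, star_sum,
    star_mul, Finset.sum_mul, Finset.mul_sum, re_sum]
  rw [Finset.sum_comm]
  refine Finset.sum_congr rfl fun j _ => Finset.sum_congr rfl fun i _ => ?_
  rw [mul_assoc]

/-- `x⁰ = A⁺·y` is the least-norm least squares solution of the right system `A·x = y`:
any `x` achieving the same residual ℓ²-norm satisfies `‖x⁰‖ ≤ ‖x‖`. -/
theorem moore_penrose_minimal_norm_right (m n : ℕ) (A : Matrix (Fin m) (Fin n) ℍ[ℝ])
    (B : Matrix (Fin n) (Fin m) ℍ[ℝ])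
    (hB1 : (A * B)ᴴ = A * B) (hB2 : (B * A)ᴴ = B * A)
    (hB3 : A * B * A = A) (hB4 : B * A * B = B)
    (y : Fin m → ℍ[ℝ]) :
    ∀ x : Fin n → ℍ[ℝ],
      Real.sqrt (∑ i, ‖A.mulVec x i - y i‖ ^ 2) =
          Real.sqrt (∑ i, ‖A.mulVec (B.mulVec y) i - y i‖ ^ 2) →
        Real.sqrt (∑ i, ‖B.mulVec y i‖ ^ 2) ≤ Real.sqrt (∑ i, ‖x i‖ ^ 2) := by
  intro x hx
  obtain ⟨x0, hx0⟩ : ∃ x0, x0 = B.mulVec y := ⟨_, rfl⟩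
  obtain ⟨u, hu⟩ : ∃ u, u = A.mulVec x - A.mulVec x0 := ⟨_, rfl⟩
  obtain ⟨w, hw⟩ : ∃ w, w = A.mulVec x0 - y := ⟨_, rfl⟩
  rw [← hx0] at hx
  have huw : (fun i => A.mulVec x i - y i) = u + w := by
    funext i; simp [hu, hw, sub_add_sub_cancel]
  -- Aᴴ annihilates w
  have hAw : Aᴴ.mulVec w = 0 := by
    have hAP : Aᴴ * (A * B) = Aᴴ := by
      calc Aᴴ * (A * B) = Aᴴ * (A * B)ᴴ := by rw [hB1]
        _ = ((A * B) * A)ᴴ := (Matrix.conjTranspose_mul _ _).symm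
        _ = Aᴴ := by rw [hB3]
    have hA0 : A.mulVec x0 = (A * B).mulVec y := by
      rw [hx0, Matrix.mulVec_mulVec]
    rw [hw, Matrix.mulVec_sub, hA0, Matrix.mulVec_mulVec, ← Matrix.mul_assoc, Matrix.mul_assoc,
      hAP, sub_self]
  -- cross term zero
  have hcross : qip u w = 0 := by
    have husub : u = A.mulVec (x - x0) := by rw [Matrix.mulVec_sub, hu]
    rw [husub, qip_adjoint, hAw, qip_zero_right]
  -- sums of squares equal
  have h1 : (0:ℝ) ≤ ∑ i, ‖A.mulVec x i - y i‖ ^ 2 := Finset.sum_nonneg fun i _ => sq_nonneg _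
  have h2 : (0:ℝ) ≤ ∑ i, ‖A.mulVec x0 i - y i‖ ^ 2 := Finset.sum_nonneg fun i _ => sq_nonneg _
  have hsum : ∑ i, ‖A.mulVec x i - y i‖ ^ 2 = ∑ i, ‖A.mulVec x0 i - y i‖ ^ 2 :=
    (Real.sqrt_inj h1 h2).1 hx
  have hq : qip (u + w) (u + w) = qip w w := by
    have e1 : qip (u + w) (u + w) = ∑ i, ‖A.mulVec x i - y i‖ ^ 2 := by
      rw [qip_self, ← huw]
    have e2 : qip w w = ∑ i, ‖A.mulVec x0 i - y i‖ ^ 2 := by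
      rw [qip_self, hw]; rfl
    rw [e1, e2, hsum]
  have huu : qip u u = 0 := by
    have expand : qip (u + w) (u + w) = qip u u + qip w w := by
      rw [qip_add_left, qip_add_right, qip_add_right, hcross, qip_symm w u, hcross]
      ring
    rw [expand] at hq
    linarith
  -- u = 0 hence A x = A x0
  have hu0 : A.mulVec x = A.mulVec x0 := by
    rw [qip_self] at huu
    have hzero : ∀ i, ‖u i‖ ^ 2 = 0 := by
      intro i
      have hnn : ∀ i ∈ Finset.univ, (0:ℝ) ≤ ‖u i‖ ^ 2 := fun i _ => sq_nonneg _
      exact (Finset.sum_eq_zero_iff_of_nonneg hnn).1 huu i (Finset.mem_univ i)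
    have huz : u = 0 := by
      funext i
      have h := hzero i
      exact norm_eq_zero.1 (by nlinarith [norm_nonneg (u i)])
    rw [hu] at huz
    exact sub_eq_zero.1 huz
  -- B A x = x0
  have hQx : (B * A).mulVec x = x0 := by
    rw [← Matrix.mulVec_mulVec, hu0, hx0, Matrix.mulVec_mulVec, Matrix.mulVec_mulVec, hB4]
  -- decomposition of x
  obtain ⟨z, hz⟩ : ∃ z, z = x - (B * A).mulVec x := ⟨_, rfl⟩
  have hcross2 : qip ((B * A).mulVec x) z = 0 := by
    rw [qip_adjoint, hB2]
    have : (B * A).mulVec z = 0 := by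
      rw [hz, Matrix.mulVec_sub, Matrix.mulVec_mulVec, ← Matrix.mul_assoc,
        hB4, sub_self]
    rw [this, qip_zero_right]
  have hxdecomp : x = (B * A).mulVec x + z := by
    funext i; simp [hz]
  have hfinal : qip x x = qip x0 x0 + qip z z := by
    calc qip x x = qip ((B * A).mulVec x + z) ((B * A).mulVec x + z) := by rw [← hxdecomp]
      _ = qip ((B * A).mulVec x) ((B * A).mulVec x) + qip ((B * A).mulVec x) z
            + qip z ((B * A).mulVec x) + qip z z := by
          rw [qip_add_left, qip_add_right, qip_add_right]; ring
      _ = qip x0 x0 + qip z z := by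
          rw [hcross2, qip_symm z, hcross2, hQx]; ring
  have hle : ∑ i, ‖x0 i‖ ^ 2 ≤ ∑ i, ‖x i‖ ^ 2 := by
    have := qip_self_nonneg z
    have h := hfinal
    rw [qip_self, qip_self] at h
    linarith
  rw [← hx0]
  exact Real.sqrt_le_sqrt hle
end

section
/- Let A ∈ ℍ^{m×n} be a quaternion matrix, let B ∈ ℍ^{n×m} satisfy the four Penrose equations for A, and let y ∈ ℍ^n be a row vector. Set x⁰ = y·B (vector–matrix product). Then for every row vector x ∈ ℍ^m, ‖x⁰·A − y‖ ≤ ‖x·A − y‖, where ‖v‖ = √(Σᵢ |vᵢ|²) is the ℓ²-norm of a quaternion row vector. That is, x⁰ = y·B minimizes ‖x·A − y‖ over all row vectors x ∈ ℍ^m. -/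
open scoped Quaternion Matrix

/-- `x⁰ = y·A⁺` is a least squares solution of the left system `x·A = y`: it minimizes the
ℓ²-norm of the residual `x·A − y` over all quaternion row vectors `x`. -/
theorem moore_penrose_least_squares_left (m n : ℕ) (A : Matrix (Fin m) (Fin n) ℍ[ℝ])
    (B : Matrix (Fin n) (Fin m) ℍ[ℝ])
    (hB1 : (A * B)ᴴ = A * B) (hB2 : (B * A)ᴴ = B * A)
    (hB3 : A * B * A = A) (hB4 : B * A * B = B)
    (y : Fin n → ℍ[ℝ]) :
    ∀ x : Fin m → ℍ[ℝ],
      Real.sqrt (∑ j, ‖Matrix.vecMul (Matrix.vecMul y B) A j - y j‖ ^ 2) ≤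
        Real.sqrt (∑ j, ‖Matrix.vecMul x A j - y j‖ ^ 2) := by
  intro x
  apply Real.sqrt_le_sqrt
  set u : Fin n → ℍ[ℝ] := fun j =>
    Matrix.vecMul x A j - Matrix.vecMul (Matrix.vecMul y B) A j with hu
  set v : Fin n → ℍ[ℝ] := fun j =>
    Matrix.vecMul (Matrix.vecMul y B) A j - y j with hv
  have hsplit : ∀ j, Matrix.vecMul x A j - y j = u j + v j := by
    intro j; simp [hu, hv]
  -- cross term vanishes
  have hcross : ∑ j, (u j * star (v j)).re = 0 := by
    have key : ∑ j, u j * star (v j) = 0 := by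
      have hu' : u = Matrix.vecMul (x - Matrix.vecMul y B) A := by
        funext j
        simp [hu, Matrix.sub_vecMul]
      have hsv : (fun j => star (v j)) =
          Matrix.mulVec (B * A - 1)ᴴ (fun i => star (y i)) := by
        funext j
        have hv' : v = Matrix.vecMul y (B * A - 1) := by
          funext j
          simp [hv, Matrix.vecMul_vecMul, Matrix.vecMul_sub]
        rw [hv']
        simp [Matrix.vecMul, Matrix.mulVec, dotProduct, Matrix.conjTranspose_apply,
          star_sum, star_mul]
      calc ∑ j, u j * star (v j)
          = dotProduct u (fun j => star (v j)) := rfl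
        _ = dotProduct (Matrix.vecMul u (B * A - 1)ᴴ) (fun i => star (y i)) := by
            rw [hsv, Matrix.dotProduct_mulVec]
        _ = 0 := by
            have : Matrix.vecMul u (B * A - 1)ᴴ = 0 := by
              rw [hu', Matrix.conjTranspose_sub, hB2, Matrix.conjTranspose_one,
                Matrix.vecMul_vecMul, Matrix.mul_sub, Matrix.mul_one, ← Matrix.mul_assoc, hB3,
                sub_self, Matrix.vecMul_zero]
            rw [this, zero_dotProduct]
    calc ∑ j, (u j * star (v j)).re
        = ∑ j, (QuaternionAlgebra.reₗ (-1 : ℝ) (0 : ℝ) (-1 : ℝ)) (u j * star (v j)) := by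
          rfl
      _ = (QuaternionAlgebra.reₗ (-1 : ℝ) (0 : ℝ) (-1 : ℝ)) (∑ j, u j * star (v j)) :=
          (map_sum _ _ _).symm
      _ = 0 := by exact (congrArg _ key).trans (map_zero _)
  have hpyth : ∀ j, ‖u j + v j‖ ^ 2 = ‖u j‖ ^ 2 + 2 * (u j * star (v j)).re + ‖v j‖ ^ 2 := by
    intro j
    have := @norm_add_sq_real ℍ[ℝ] _ _ (u j) (v j)
    rwa [Quaternion.inner_def] at this
  calc ∑ j, ‖v j‖ ^ 2 ≤ ∑ j, ‖u j‖ ^ 2 + ∑ j, ‖v j‖ ^ 2 := by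
        nlinarith [Finset.sum_nonneg (fun j (_ : j ∈ Finset.univ) => sq_nonneg ‖u j‖)]
    _ = ∑ j, ‖Matrix.vecMul x A j - y j‖ ^ 2 := by
        simp_rw [hsplit, hpyth, Finset.sum_add_distrib, ← Finset.mul_sum, hcross]
        ring
end

section
/- Let A ∈ ℍ^{m×n} be a quaternion matrix, let B ∈ ℍ^{n×m} satisfy the four Penrose equations for A, and let y ∈ ℍ^n be a row vector. Set x⁰ = y·B. Then among all least squares solutions of the left system x·A = y, x⁰ has least norm: for every row vector x ∈ ℍ^m with ‖x·A − y‖ = ‖x⁰·A − y‖, one has ‖x⁰‖ ≤ ‖x‖, where ‖v‖ = √(Σᵢ |vᵢ|²) is the ℓ²-norm of a quaternion row vector. -/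
open scoped Quaternion Matrix
open Matrix

noncomputable def qS {k : ℕ} (u v : Fin k → ℍ[ℝ]) : ℍ[ℝ] := ∑ j, u j * star (v j)

lemma q_re_sum {k : ℕ} (f : Fin k → ℍ[ℝ]) : (∑ j, f j).re = ∑ j, (f j).re :=
  map_sum (QuaternionAlgebra.reₗ (R := ℝ) (c₁ := -1) (c₂ := 0) (c₃ := -1)) f Finset.univ

lemma qS_self_re {k : ℕ} (u : Fin k → ℍ[ℝ]) : (qS u u).re = ∑ j, ‖u j‖ ^ 2 := by
  unfold qS
  rw [q_re_sum]
  refine Finset.sum_congr rfl fun j _ => ?_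
  rw [Quaternion.self_mul_star, Quaternion.re_coe, Quaternion.normSq_eq_norm_mul_self, sq]

lemma qS_vecMul_left {k l : ℕ} (w : Fin k → ℍ[ℝ]) (M : Matrix (Fin k) (Fin l) ℍ[ℝ])
    (v : Fin l → ℍ[ℝ]) : qS (vecMul w M) v = qS w (vecMul v Mᴴ) := by
  unfold qS
  simp only [vecMul, dotProduct, conjTranspose_apply, star_sum, StarMul.star_mul,
    star_star, Finset.sum_mul, Finset.mul_sum, mul_assoc]
  rw [Finset.sum_comm]

lemma qS_expand {k : ℕ} (u v : Fin k → ℍ[ℝ]) :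
    ∑ j, ‖u j + v j‖ ^ 2 = (∑ j, ‖u j‖ ^ 2) + (∑ j, ‖v j‖ ^ 2) + 2 * (qS u v).re := by
  have h : qS (u + v) (u + v) = qS u u + qS v v + (qS u v + qS v u) := by
    unfold qS
    simp only [Pi.add_apply, star_add, mul_add, add_mul, Finset.sum_add_distrib]
    abel
  have h2 : (qS v u).re = (qS u v).re := by
    unfold qS
    rw [q_re_sum, q_re_sum]
    refine Finset.sum_congr rfl fun j _ => ?_
    rw [show v j * star (u j) = star (u j * star (v j)) by
      rw [StarMul.star_mul, star_star]]
    exact Quaternion.re_star _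
  have h3 := congrArg QuaternionAlgebra.re h
  simp only [Quaternion.re_add, h2, qS_self_re] at h3
  have h4 : ∀ j, ‖(u + v) j‖ ^ 2 = ‖u j + v j‖ ^ 2 := fun j => by simp
  calc ∑ j, ‖u j + v j‖ ^ 2 = ∑ j, ‖(u + v) j‖ ^ 2 :=
        Finset.sum_congr rfl fun j _ => (h4 j).symm
    _ = _ := by rw [h3]; ring

/-- `x⁰ = y·A⁺` is the least-norm least squares solution of the left system `x·A = y`:
any row vector `x` achieving the same residual ℓ²-norm satisfies `‖x⁰‖ ≤ ‖x‖`. -/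
theorem moore_penrose_minimal_norm_left (m n : ℕ) (A : Matrix (Fin m) (Fin n) ℍ[ℝ])
    (B : Matrix (Fin n) (Fin m) ℍ[ℝ])
    (hB1 : (A * B)ᴴ = A * B) (hB2 : (B * A)ᴴ = B * A)
    (hB3 : A * B * A = A) (hB4 : B * A * B = B)
    (y : Fin n → ℍ[ℝ]) :
    ∀ x : Fin m → ℍ[ℝ],
      Real.sqrt (∑ j, ‖Matrix.vecMul x A j - y j‖ ^ 2) =
          Real.sqrt (∑ j, ‖Matrix.vecMul (Matrix.vecMul y B) A j - y j‖ ^ 2) →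
        Real.sqrt (∑ i, ‖Matrix.vecMul y B i‖ ^ 2) ≤ Real.sqrt (∑ i, ‖x i‖ ^ 2) := by
  intro x hx
  set z := vecMul y B with hz
  set w := x - z with hw
  have horth : qS (vecMul w A) (vecMul z A - y) = 0 := by
    rw [qS_vecMul_left]
    have hA : (B * A) * Aᴴ = Aᴴ := by
      calc (B * A) * Aᴴ = (B * A)ᴴ * Aᴴ := by rw [hB2]
        _ = (A * (B * A))ᴴ := by rw [← Matrix.conjTranspose_mul]
        _ = Aᴴ := by rw [← Matrix.mul_assoc, hB3]
    have hA' : B * (A * Aᴴ) = Aᴴ := by rw [← Matrix.mul_assoc]; exact hA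
    have hv : vecMul (vecMul z A - y) Aᴴ = 0 := by
      rw [Matrix.sub_vecMul, hz]
      simp only [Matrix.vecMul_vecMul]
      rw [show B * A * Aᴴ = B * (A * Aᴴ) from Matrix.mul_assoc B A Aᴴ, hA', sub_self]
    rw [hv]
    unfold qS
    simp
  have hres : (∑ j, ‖vecMul x A j - y j‖ ^ 2)
      = (∑ j, ‖vecMul w A j‖ ^ 2) + ∑ j, ‖vecMul z A j - y j‖ ^ 2 := by
    have hxw : ∀ j, vecMul x A j - y j = vecMul w A j + (vecMul z A j - y j) := by
      intro j
      have h5 : vecMul w A = vecMul x A - vecMul z A := by rw [hw, Matrix.sub_vecMul]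
      rw [h5]
      simp only [Pi.sub_apply]
      abel
    calc ∑ j, ‖vecMul x A j - y j‖ ^ 2
        = ∑ j, ‖vecMul w A j + (fun j => vecMul z A j - y j) j‖ ^ 2 :=
          Finset.sum_congr rfl fun j _ => by rw [hxw j]
      _ = _ := by
          rw [qS_expand (vecMul w A) (fun j => vecMul z A j - y j)]
          have h6 : qS (vecMul w A) (fun j => vecMul z A j - y j) = 0 := horth
          rw [h6]
          simp
  have hnn1 : (0:ℝ) ≤ ∑ j, ‖vecMul x A j - y j‖ ^ 2 :=
    Finset.sum_nonneg fun j _ => sq_nonneg _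
  have hnn2 : (0:ℝ) ≤ ∑ j, ‖vecMul z A j - y j‖ ^ 2 :=
    Finset.sum_nonneg fun j _ => sq_nonneg _
  have heq : (∑ j, ‖vecMul x A j - y j‖ ^ 2) = ∑ j, ‖vecMul z A j - y j‖ ^ 2 := by
    have h7 := congrArg (fun t => t ^ 2) hx
    simpa [Real.sq_sqrt hnn1, Real.sq_sqrt hnn2] using h7
  have hzero : (∑ j, ‖vecMul w A j‖ ^ 2) = 0 := by linarith
  have hwA : vecMul w A = 0 := by
    funext j
    have h8 : ‖vecMul w A j‖ ^ 2 = 0 :=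
      (Finset.sum_eq_zero_iff_of_nonneg
        (fun i _ => sq_nonneg ‖vecMul w A i‖)).mp hzero j (Finset.mem_univ j)
    have h9 : ‖vecMul w A j‖ = 0 := by
      exact pow_eq_zero_iff (n := 2) (by norm_num) |>.mp h8
    simpa using norm_eq_zero.mp h9
  have hzw : qS z w = 0 := by
    have hzz : vecMul z (A * B) = z := by
      rw [hz, Matrix.vecMul_vecMul, ← Matrix.mul_assoc, hB4]
    calc qS z w = qS (vecMul z (A * B)) w := by rw [hzz]
      _ = qS z (vecMul w (A * B)ᴴ) := qS_vecMul_left _ _ _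
      _ = qS z (vecMul w (A * B)) := by rw [hB1]
      _ = qS z (vecMul (vecMul w A) B) := by rw [Matrix.vecMul_vecMul]
      _ = 0 := by
          rw [hwA]
          unfold qS
          simp [Matrix.vecMul, dotProduct]
  have hnorm : (∑ i, ‖x i‖ ^ 2) = (∑ i, ‖z i‖ ^ 2) + ∑ i, ‖w i‖ ^ 2 := by
    calc ∑ i, ‖x i‖ ^ 2 = ∑ i, ‖z i + w i‖ ^ 2 :=
          Finset.sum_congr rfl fun i _ => by rw [hw]; simp
      _ = _ := by rw [qS_expand z w, hzw]; simp
  have hfin : (∑ i, ‖z i‖ ^ 2) ≤ ∑ i, ‖x i‖ ^ 2 := by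
    have h10 : (0:ℝ) ≤ ∑ i, ‖w i‖ ^ 2 := Finset.sum_nonneg fun i _ => sq_nonneg _
    linarith
  exact Real.sqrt_le_sqrt hfin
end

section
/- (Singular value decomposition over the quaternions.) For every quaternion matrix A ∈ ℍ^{m×n} there exist unitary quaternion matrices V ∈ ℍ^{m×m} and W ∈ ℍ^{n×n} and a matrix Σ ∈ ℍ^{m×n} such that: Σᵢⱼ = 0 whenever i ≠ j (as natural number indices); every diagonal entry Σᵢᵢ is a nonnegative real number; the diagonal entries are nonincreasing (Σᵢᵢ ≥ Σⱼⱼ as reals whenever i ≤ j); and A = V·Σ·Wᴴ. -/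
open scoped Quaternion Matrix RealInnerProductSpace
open Quaternion Matrix Finset

noncomputable section QSVDsec

namespace QSVD

abbrev H := ℍ[ℝ]

lemma coe_sum {α : Type*} (s : Finset α) (f : α → ℝ) :
    ((∑ i ∈ s, f i : ℝ) : H) = ∑ i ∈ s, ((f i : ℝ) : H) := by
  rw [← Quaternion.algebraMap_def, map_sum]

lemma re_sum {α : Type*} (s : Finset α) (f : α → H) :
    (∑ i ∈ s, f i).re = ∑ i ∈ s, (f i).re := by
  induction s using Finset.cons_induction with
  | empty => simp
  | cons a s ha ih => simp [Finset.sum_cons, ih]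

lemma re_mul_comm (a b : H) : (a * b).re = (b * a).re := by
  simp [Quaternion.re_mul]; ring

/-- quaternionic inner product of vectors -/
def qdot {N : ℕ} (x y : Fin N → H) : H := ∑ i, star (x i) * y i

lemma qdot_self {N : ℕ} (x : Fin N → H) :
    qdot x x = ((∑ i, normSq (x i) : ℝ) : H) := by
  rw [qdot, coe_sum]
  exact Finset.sum_congr rfl fun i _ => (Quaternion.star_mul_self (x i))

/-- pad a matrix with a scalar corner -/
def bd {p q : ℕ} (a : H) (M : Matrix (Fin p) (Fin q) H) :
    Matrix (Fin (p+1)) (Fin (q+1)) H :=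
  Matrix.of fun i j =>
    Fin.cases (Fin.cases a (fun _ => 0) j) (fun i' => Fin.cases 0 (fun j' => M i' j') j) i

@[simp] lemma bd_zero_zero {p q} (a : H) (M : Matrix (Fin p) (Fin q) H) :
    bd a M 0 0 = a := rfl
@[simp] lemma bd_zero_succ {p q} (a : H) (M : Matrix (Fin p) (Fin q) H) (j : Fin q) :
    bd a M 0 j.succ = 0 := rfl
@[simp] lemma bd_succ_zero {p q} (a : H) (M : Matrix (Fin p) (Fin q) H) (i : Fin p) :
    bd a M i.succ 0 = 0 := rfl
@[simp] lemma bd_succ_succ {p q} (a : H) (M : Matrix (Fin p) (Fin q) H) (i : Fin p) (j : Fin q) :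
    bd a M i.succ j.succ = M i j := rfl

lemma bd_mul {p q r : ℕ} (a b : H) (M : Matrix (Fin p) (Fin q) H)
    (N : Matrix (Fin q) (Fin r) H) :
    bd a M * bd b N = bd (a * b) (M * N) := by
  refine Matrix.ext fun i j => ?_
  rw [mul_apply, Fin.sum_univ_succ]
  refine Fin.cases ?_ (fun i' => ?_) i <;> refine Fin.cases ?_ (fun j' => ?_) j <;>
    simp [mul_apply]

lemma bd_conjTranspose {p q : ℕ} (a : H) (M : Matrix (Fin p) (Fin q) H) :
    (bd a M)ᴴ = bd (star a) Mᴴ := by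
  refine Matrix.ext fun i j => ?_
  refine Fin.cases ?_ (fun i' => ?_) i <;> refine Fin.cases ?_ (fun j' => ?_) j <;>
    simp [conjTranspose_apply]

lemma bd_one {p : ℕ} : bd (1 : H) (1 : Matrix (Fin p) (Fin p) H) = 1 := by
  refine Matrix.ext fun i j => ?_
  refine Fin.cases ?_ (fun i' => ?_) i <;> refine Fin.cases ?_ (fun j' => ?_) j <;>
    simp [Matrix.one_apply, Fin.succ_inj, Fin.succ_ne_zero, (Fin.succ_ne_zero _).symm]

lemma exists_unitary_col {N : ℕ} (x : Fin (N+1) → H) (hx : qdot x x = 1) :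
    ∃ U : Matrix (Fin (N+1)) (Fin (N+1)) H,
      Uᴴ * U = 1 ∧ U * Uᴴ = 1 ∧ ∀ i, U i 0 = x i := by
  classical
  set a : H := x 0 with ha
  set r : ℝ := ‖a‖ with hr
  have hr0 : 0 ≤ r := norm_nonneg a
  have hnormSq : normSq a = r * r := by rw [hr, Quaternion.normSq_eq_norm_mul_self]
  set c : H := if a = 0 then 1 else -(star a) * ((r⁻¹ : ℝ) : H) with hc
  have hcc : star c * c = 1 := by
    by_cases h : a = 0
    · simp [hc, h]
    · have hrne : r ≠ 0 := by simpa [hr] using h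
      rw [hc, if_neg h]
      rw [StarMul.star_mul, star_neg, star_star, Quaternion.star_coe]
      rw [show ((r⁻¹:ℝ):H) * -a * (-(star a) * ((r⁻¹:ℝ):H)) =
          ((r⁻¹:ℝ):H) * (a * star a) * ((r⁻¹:ℝ):H) by noncomm_ring]
      rw [Quaternion.self_mul_star, hnormSq, ← Quaternion.coe_mul, ← Quaternion.coe_mul]
      rw [show (r⁻¹ * (r*r) * r⁻¹ : ℝ) = 1 by field_simp]
      exact Quaternion.coe_one
  have hccr : c * star c = 1 := by
    rw [Quaternion.self_mul_star]
    rw [Quaternion.star_mul_self] at hcc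
    exact hcc
  set z : Fin (N+1) → H := fun i => x i * c with hz
  have hz0 : z 0 = ((-r : ℝ) : H) := by
    by_cases h : a = 0
    · simp [hz, ← ha, h, hr]
    · have hrne : r ≠ 0 := by simpa [hr] using h
      rw [hz]
      show a * c = _
      rw [hc, if_neg h]
      rw [show a * (-(star a) * ((r⁻¹:ℝ):H)) = -((a * star a) * ((r⁻¹:ℝ):H)) by noncomm_ring]
      rw [Quaternion.self_mul_star, hnormSq, ← Quaternion.coe_mul, ← Quaternion.coe_neg]
      exact congrArg _ (by field_simp)
  have hzz : qdot z z = 1 := by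
    unfold qdot
    have : ∀ i, star (z i) * z i = star c * (star (x i) * x i) * c := by
      intro i
      rw [hz]
      show star (x i * c) * (x i * c) = _
      rw [StarMul.star_mul]; noncomm_ring
    simp_rw [this]
    rw [← Finset.sum_mul, ← Finset.mul_sum]
    rw [show (∑ i, star (x i) * x i) = qdot x x from rfl, hx, mul_one, hcc]
  set w : Fin (N+1) → H := fun i => z i - (if i = 0 then 1 else 0) with hw
  have hw0 : w 0 = ((-(1+r) : ℝ) : H) := by
    rw [hw]
    show z 0 - 1 = _
    rw [hz0]
    rw [show (1:H) = ((1:ℝ):H) from Quaternion.coe_one.symm, ← Quaternion.coe_sub]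
    exact congrArg _ (by ring)
  have hwsucc : ∀ i : Fin N, w i.succ = z i.succ := by
    intro i
    rw [hw]
    simp [Fin.succ_ne_zero]
  have hww : qdot w w = ((2*(1+r) : ℝ) : H) := by
    have h1 : qdot z z = star (z 0) * z 0 + ∑ i : Fin N, star (z i.succ) * z i.succ := by
      rw [qdot, Fin.sum_univ_succ]
    have h2 : qdot w w = star (w 0) * w 0 + ∑ i : Fin N, star (z i.succ) * z i.succ := by
      rw [qdot, Fin.sum_univ_succ]
      congr 1
      exact Finset.sum_congr rfl fun i _ => by rw [hwsucc]
    have h3 : ∑ i : Fin N, star (z i.succ) * z i.succ = 1 - star (z 0) * z 0 := by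
      rw [h1] at hzz
      exact eq_sub_of_add_eq' hzz
    rw [h2, h3, hw0, hz0, Quaternion.star_coe, Quaternion.star_coe]
    rw [← Quaternion.coe_mul, ← Quaternion.coe_mul,
      show (1:H) = ((1:ℝ):H) from Quaternion.coe_one.symm, ← Quaternion.coe_sub,
      ← Quaternion.coe_add]
    exact congrArg _ (by ring)
  -- Householder matrix
  set β : ℝ := (1+r)⁻¹ with hβ
  have h1r : (1:ℝ) + r ≠ 0 := by positivity
  set Hm : Matrix (Fin (N+1)) (Fin (N+1)) H :=
    Matrix.of (fun i j => (1 : Matrix (Fin (N+1)) (Fin (N+1)) H) i j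
      - (β:H) * (w i * star (w j))) with hHm
  have hHmapp : ∀ i j, Hm i j = (1 : Matrix (Fin (N+1)) (Fin (N+1)) H) i j
      - (β:H) * (w i * star (w j)) := fun i j => rfl
  have hone : ∀ i j : Fin (N+1), star ((1 : Matrix (Fin (N+1)) (Fin (N+1)) H) j i)
      = (1 : Matrix (Fin (N+1)) (Fin (N+1)) H) i j := by
    intro i j
    rw [Matrix.one_apply, Matrix.one_apply]
    by_cases h : j = i
    · subst h; simp
    · rw [if_neg h, if_neg (Ne.symm h)]; simp
  have hHmH : Hmᴴ = Hm := by
    refine Matrix.ext fun i j => ?_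
    rw [conjTranspose_apply, hHmapp, hHmapp, star_sub, hone]
    congr 1
    rw [StarMul.star_mul, StarMul.star_mul, star_star, Quaternion.star_coe]
    exact (Quaternion.coe_commutes β _).symm
  have hHm2 : Hm * Hm = 1 := by
    refine Matrix.ext fun i j => ?_
    rw [mul_apply]
    have swap4 : ∀ k, ((β:H) * (w i * star (w k))) * ((β:H) * (w k * star (w j))) =
        (β:H) * (β:H) * (w i * ((star (w k) * w k) * star (w j))) := by
      intro k
      rw [show ((β:H) * (w i * star (w k))) * ((β:H) * (w k * star (w j))) =
          (β:H) * ((w i * star (w k)) * (β:H)) * (w k * star (w j)) by noncomm_ring]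
      rw [← Quaternion.coe_commutes]
      noncomm_ring
    have expand : ∀ k, Hm i k * Hm k j =
        (1 : Matrix (Fin (N+1)) (Fin (N+1)) H) i k * (1 : Matrix (Fin (N+1)) (Fin (N+1)) H) k j
        - (1 : Matrix (Fin (N+1)) (Fin (N+1)) H) i k * ((β:H) * (w k * star (w j)))
        - ((β:H) * (w i * star (w k))) * (1 : Matrix (Fin (N+1)) (Fin (N+1)) H) k j
        + (β:H) * (β:H) * (w i * ((star (w k) * w k) * star (w j))) := by
      intro k
      rw [hHmapp, hHmapp, ← swap4 k]
      noncomm_ring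
    rw [Finset.sum_congr rfl fun k _ => expand k]
    rw [Finset.sum_add_distrib, Finset.sum_sub_distrib, Finset.sum_sub_distrib]
    have e1 : ∑ k, (1 : Matrix (Fin (N+1)) (Fin (N+1)) H) i k *
        (1 : Matrix (Fin (N+1)) (Fin (N+1)) H) k j =
        (1 : Matrix (Fin (N+1)) (Fin (N+1)) H) i j := by
      rw [← mul_apply, one_mul]
    have e2 : ∑ k, (1 : Matrix (Fin (N+1)) (Fin (N+1)) H) i k * ((β:H) * (w k * star (w j)))
        = (β:H) * (w i * star (w j)) := by
      simp [Matrix.one_apply, ite_mul]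
    have e3 : ∑ k, ((β:H) * (w i * star (w k))) * (1 : Matrix (Fin (N+1)) (Fin (N+1)) H) k j
        = (β:H) * (w i * star (w j)) := by
      simp [Matrix.one_apply, mul_ite]
    have e4 : ∑ k, (β:H) * (β:H) * (w i * ((star (w k) * w k) * star (w j)))
        = ((β:H) + (β:H)) * (w i * star (w j)) := by
      rw [← Finset.mul_sum, ← Finset.mul_sum, ← Finset.sum_mul]
      rw [show (∑ k, star (w k) * w k) = qdot w w from rfl, hww]
      rw [show w i * (((2*(1+r):ℝ):H) * star (w j)) = ((2*(1+r):ℝ):H) * (w i * star (w j)) by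
        rw [← mul_assoc, ← Quaternion.coe_commutes, mul_assoc]]
      rw [← mul_assoc, ← Quaternion.coe_mul, ← Quaternion.coe_mul]
      rw [show (β * β * (2*(1+r)) : ℝ) = β + β by
        linear_combination (2*β) * inv_mul_cancel₀ h1r]
      rw [Quaternion.coe_add]
    rw [e1, e2, e3, e4]
    noncomm_ring
  have hHmcol : ∀ i, Hm i 0 = z i := by
    intro i
    rw [hHmapp, hw0, Quaternion.star_coe]
    refine Fin.cases ?_ (fun i' => ?_) i
    · rw [Matrix.one_apply_eq, hw0, hz0]
      rw [← Quaternion.coe_mul, ← Quaternion.coe_mul]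
      rw [show (β * (-(1+r) * -(1+r)) : ℝ) = 1 + r by
        linear_combination (1+r) * inv_mul_cancel₀ h1r]
      rw [show (1 : H) = ((1:ℝ):H) from Quaternion.coe_one.symm, ← Quaternion.coe_sub]
      exact congrArg _ (by ring)
    · rw [Matrix.one_apply_ne (Fin.succ_ne_zero i'), ← hwsucc]
      rw [show (β:H) * (w i'.succ * ((-(1+r):ℝ):H)) = ((-(1+r) * β : ℝ):H) * w i'.succ by
        rw [← mul_assoc, ← Quaternion.coe_commutes, ← mul_assoc, ← Quaternion.coe_mul]]
      rw [show (-(1+r) * β : ℝ) = -1 by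
        linear_combination (-1:ℝ) * inv_mul_cancel₀ h1r]
      rw [show ((-1:ℝ):H) = -1 by push_cast; ring]
      noncomm_ring
  -- assemble U
  set d : Fin (N+1) → H := fun j => if j = 0 then star c else 1 with hd
  have hd0 : d 0 = star c := by rw [hd]; simp
  have hdn : ∀ j : Fin (N+1), j ≠ 0 → d j = 1 := by
    intro j h; rw [hd]; simp [h]
  have hdd : ∀ j, star (d j) * d j = 1 := by
    intro j
    by_cases h : j = 0
    · subst h; rw [hd0, star_star]; exact hccr
    · rw [hdn j h]; simp
  have hddr : ∀ j, d j * star (d j) = 1 := by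
    intro j
    by_cases h : j = 0
    · subst h; rw [hd0, star_star]; exact hcc
    · rw [hdn j h]; simp
  refine ⟨Hm * Matrix.diagonal d, ?_, ?_, ?_⟩
  · rw [conjTranspose_mul, Matrix.diagonal_conjTranspose]
    rw [Matrix.mul_assoc, ← Matrix.mul_assoc Hmᴴ, hHmH, hHm2, Matrix.one_mul,
      Matrix.diagonal_mul_diagonal]
    rw [show (fun j => (star d) j * d j) = fun _ => (1:H) by
      funext j; rw [Pi.star_apply]; exact hdd j]
    exact Matrix.diagonal_one
  · rw [conjTranspose_mul, Matrix.diagonal_conjTranspose]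
    rw [Matrix.mul_assoc, ← Matrix.mul_assoc (Matrix.diagonal d), Matrix.diagonal_mul_diagonal]
    rw [show (fun j => d j * (star d) j) = fun _ => (1:H) by
      funext j; rw [Pi.star_apply]; exact hddr j]
    rw [Matrix.diagonal_one, Matrix.one_mul, hHmH, hHm2]
  · intro i
    rw [Matrix.mul_diagonal, hHmcol, hd0, hz]
    show x i * c * star c = x i
    rw [mul_assoc, hccr, mul_one]

abbrev E (n : ℕ) := PiLp 2 (fun _ : Fin n => H)

def Tlin {n : ℕ} (B : Matrix (Fin n) (Fin n) H) : E n →ₗ[ℝ] E n where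
  toFun v := WithLp.toLp 2 (B.mulVec v)
  map_add' u v := by simp [Matrix.mulVec_add]
  map_smul' r v := by simp [Matrix.mulVec_smul]

lemma Tlin_apply {n : ℕ} (B : Matrix (Fin n) (Fin n) H) (v : E n) :
    Tlin B v = B.mulVec v := rfl

lemma inner_eq {n : ℕ} (x y : E n) : ⟪x, y⟫ = ∑ i, (x i * star (y i)).re := by
  rw [PiLp.inner_apply]
  rfl

lemma Tlin_symm {n : ℕ} (B : Matrix (Fin n) (Fin n) H) (hB : Bᴴ = B) :
    (Tlin B).IsSymmetric := by
  intro x y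
  rw [inner_eq, inner_eq]
  have lhs : ∀ i, ((Tlin B x) i * star (y i)).re = ∑ k, (x k * (star (y i) * B i k)).re := by
    intro i
    rw [show (Tlin B x) i = ∑ k, B i k * x k from rfl, Finset.sum_mul, re_sum]
    refine Finset.sum_congr rfl fun k _ => ?_
    rw [mul_assoc, re_mul_comm, mul_assoc]
  have rhs : ∀ k, (x k * star ((Tlin B y) k)).re = ∑ i, (x k * (star (y i) * B i k)).re := by
    intro k
    rw [show (Tlin B y) k = ∑ i, B k i * y i from rfl, star_sum, Finset.mul_sum, re_sum]
    refine Finset.sum_congr rfl fun i _ => ?_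
    rw [StarMul.star_mul, show star (B k i) = B i k by rw [← Matrix.conjTranspose_apply, hB]]
  rw [Finset.sum_congr rfl fun i _ => lhs i, Finset.sum_congr rfl fun k _ => rhs k]
  exact Finset.sum_comm

lemma inner_AHA {m n : ℕ} (A : Matrix (Fin m) (Fin n) H) (v : E n) :
    ⟪Tlin (Aᴴ * A) v, v⟫ = ∑ i, normSq (A.mulVec v i) := by
  rw [inner_eq]
  have h1 : ∀ k, Tlin (Aᴴ * A) v k = ∑ i, star (A i k) * (A.mulVec v) i := by
    intro k
    rw [show Tlin (Aᴴ*A) v k = (Aᴴ*A).mulVec v k from rfl, ← Matrix.mulVec_mulVec]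
    rw [show Aᴴ.mulVec (A.mulVec v) k = ∑ i, Aᴴ k i * (A.mulVec v) i from rfl]
    exact Finset.sum_congr rfl fun i _ => by rw [Matrix.conjTranspose_apply]
  calc ∑ k, (Tlin (Aᴴ*A) v k * star (v k)).re
      = ∑ k, ∑ i, ((A.mulVec v) i * star (A i k * v k)).re := by
        refine Finset.sum_congr rfl fun k _ => ?_
        rw [h1 k, Finset.sum_mul, re_sum]
        refine Finset.sum_congr rfl fun i _ => ?_
        rw [mul_assoc, re_mul_comm, mul_assoc, ← StarMul.star_mul]
    _ = ∑ i, normSq (A.mulVec v i) := by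
        rw [Finset.sum_comm]
        refine Finset.sum_congr rfl fun i _ => ?_
        rw [← re_sum, ← Finset.mul_sum, ← star_sum]
        rw [show (∑ k, A i k * v k) = A.mulVec v i from rfl]
        exact (Quaternion.normSq_def _).symm

lemma norm_sq_E {n : ℕ} (v : E n) : ‖v‖^2 = ∑ i, normSq (v i) := by
  rw [← real_inner_self_eq_norm_sq, inner_eq]
  exact Finset.sum_congr rfl fun i _ => (Quaternion.normSq_def _).symm

def lam {n : ℕ} (T : E n →ₗ[ℝ] E n) : ℝ :=
  ⨆ x : {x : E n // x ≠ 0}, RCLike.re ⟪T x, x⟫ / ‖(x : E n)‖ ^ 2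

lemma lam_bddAbove {n : ℕ} (T : E n →ₗ[ℝ] E n) :
    BddAbove (Set.range fun x : {x : E n // x ≠ 0} =>
      RCLike.re ⟪T x, x⟫ / ‖(x : E n)‖ ^ 2) := by
  refine ⟨‖LinearMap.toContinuousLinearMap T‖, ?_⟩
  rintro y ⟨⟨v, hv⟩, rfl⟩
  have hvn : (0:ℝ) < ‖v‖ := by
    simpa [norm_pos_iff] using hv
  have h2 : (0:ℝ) < ‖v‖^2 := by positivity
  dsimp only
  rw [div_le_iff₀ h2]
  have : RCLike.re ⟪T v, v⟫ = ⟪T v, v⟫ := rfl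
  rw [this]
  calc ⟪T v, v⟫ ≤ ‖T v‖ * ‖v‖ := real_inner_le_norm _ _
    _ ≤ (‖LinearMap.toContinuousLinearMap T‖ * ‖v‖) * ‖v‖ := by
        have := (LinearMap.toContinuousLinearMap T).le_opNorm v
        have hTv : ‖T v‖ ≤ ‖LinearMap.toContinuousLinearMap T‖ * ‖v‖ := this
        exact mul_le_mul_of_nonneg_right hTv (norm_nonneg v)
    _ = ‖LinearMap.toContinuousLinearMap T‖ * ‖v‖^2 := by ring

lemma rayleigh_le_lam {n : ℕ} (T : E n →ₗ[ℝ] E n) (v : E n) (hv : v ≠ 0) :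
    ⟪T v, v⟫ / ‖v‖ ^ 2 ≤ lam T :=
  le_ciSup (lam_bddAbove T) (⟨v, hv⟩ : {x : E n // x ≠ 0})

lemma eigen_le_lam {n : ℕ} (T : E n →ₗ[ℝ] E n) (μ : ℝ) (v : E n) (hv : v ≠ 0)
    (h : T v = μ • v) : μ ≤ lam T := by
  have hvn : (0:ℝ) < ‖v‖ := by simpa [norm_pos_iff] using hv
  have h2 : (0:ℝ) < ‖v‖^2 := by positivity
  have : ⟪T v, v⟫ / ‖v‖^2 = μ := by
    rw [h, real_inner_smul_left, real_inner_self_eq_norm_sq]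
    field_simp
  rw [← this]
  exact rayleigh_le_lam T v hv

lemma exists_eigen_lam {n : ℕ} (T : E (n+1) →ₗ[ℝ] E (n+1)) (hT : T.IsSymmetric) :
    ∃ v : E (n+1), v ≠ 0 ∧ T v = lam T • v := by
  haveI : Nontrivial (E (n+1)) := by
    refine ⟨0, WithLp.toLp 2 (fun _ => 1 : Fin (n+1) → H), fun h => ?_⟩
    have h0 := congrArg (fun v : E (n+1) => v 0) h
    simp at h0
  have he := hT.hasEigenvalue_iSup_of_finiteDimensional
  obtain ⟨v, hv⟩ := he.exists_hasEigenvector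
  exact ⟨v, hv.2, by simpa [lam] using hv.apply_eq_smul⟩


lemma unitary_mul {N : ℕ} (U K : Matrix (Fin N) (Fin N) H)
    (hU1 : Uᴴ * U = 1) (hU2 : U * Uᴴ = 1) (hK1 : Kᴴ * K = 1) (hK2 : K * Kᴴ = 1) :
    ((U * K)ᴴ * (U * K) = 1 ∧ (U * K) * (U * K)ᴴ = 1) := by
  constructor
  · rw [conjTranspose_mul, Matrix.mul_assoc, ← Matrix.mul_assoc Uᴴ, hU1, Matrix.one_mul, hK1]
  · rw [conjTranspose_mul, Matrix.mul_assoc, ← Matrix.mul_assoc K, hK2, Matrix.one_mul, hU2]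

def Good {m n : ℕ} (A : Matrix (Fin m) (Fin n) H) : Prop :=
  ∃ (V : Matrix (Fin m) (Fin m) ℍ[ℝ]) (W : Matrix (Fin n) (Fin n) ℍ[ℝ])
    (S : Matrix (Fin m) (Fin n) ℍ[ℝ]),
    (Vᴴ * V = 1 ∧ V * Vᴴ = 1) ∧ (Wᴴ * W = 1 ∧ W * Wᴴ = 1) ∧
    (∀ (i : Fin m) (j : Fin n), (i : ℕ) ≠ (j : ℕ) → S i j = 0) ∧
    (∀ (i : Fin m) (j : Fin n), (i : ℕ) = (j : ℕ) →
      ∃ r : ℝ, 0 ≤ r ∧ S i j = (r : ℍ[ℝ])) ∧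
    (∀ (i i' : Fin m) (j j' : Fin n), (i : ℕ) = (j : ℕ) → (i' : ℕ) = (j' : ℕ) →
      (i : ℕ) ≤ (i' : ℕ) → (S i' j').re ≤ (S i j).re) ∧
    A = V * S * Wᴴ

lemma good_zero {m n : ℕ} (A : Matrix (Fin m) (Fin n) H) (hA : A = 0) : Good A := by
  refine ⟨1, 1, 0, ⟨by simp, by simp⟩, ⟨by simp, by simp⟩,
    fun i j _ => rfl, fun i j _ => ⟨0, le_refl _, by simp⟩,
    fun i i' j j' _ _ _ => le_refl _, by simp [hA]⟩


lemma col_eigen {p q : ℕ} (A : Matrix (Fin p) (Fin q) H) (Vf : Matrix (Fin p) (Fin p) H)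
    (Wf : Matrix (Fin q) (Fin q) H) (Sf : Matrix (Fin p) (Fin q) H)
    (hVfl : Vfᴴ * Vf = 1) (hWfl : Wfᴴ * Wf = 1)
    (hfac : A = Vf * Sf * Wfᴴ) (j : Fin q) (μ : ℝ)
    (hcol : ∀ k, (Sfᴴ * Sf) k j = if k = j then ((μ:ℝ):H) else 0) :
    (Aᴴ * A).mulVec (fun i => Wf i j) = (fun i => μ • Wf i j) ∧
      (fun i => Wf i j) ≠ (0 : Fin q → H) := by
  have hBW : Aᴴ * A * Wf = Wf * (Sfᴴ * Sf) := by
    rw [hfac]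
    rw [conjTranspose_mul (Vf * Sf) Wfᴴ, conjTranspose_conjTranspose,
      conjTranspose_mul Vf Sf]
    rw [Matrix.mul_assoc (Wf * (Sfᴴ * Vfᴴ)) (Vf * Sf * Wfᴴ) Wf,
      Matrix.mul_assoc (Vf * Sf) Wfᴴ Wf, hWfl, Matrix.mul_one,
      Matrix.mul_assoc Wf (Sfᴴ * Vfᴴ) (Vf * Sf),
      Matrix.mul_assoc Sfᴴ Vfᴴ (Vf * Sf), ← Matrix.mul_assoc Vfᴴ Vf Sf, hVfl,
      Matrix.one_mul]
  constructor
  · funext i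
    have h1 : ((Aᴴ * A).mulVec (fun k => Wf k j)) i = (Aᴴ * A * Wf) i j := by
      rw [Matrix.mul_apply]
      rfl
    rw [h1, hBW, Matrix.mul_apply]
    rw [Finset.sum_congr rfl fun k _ => by rw [hcol k]]
    simp only [mul_ite, mul_zero]
    rw [Finset.sum_ite_eq' Finset.univ j (fun k => Wf i k * ((μ:ℝ):H)),
      if_pos (Finset.mem_univ j)]
    exact Quaternion.mul_coe_eq_smul _ _
  · intro h0
    have hq : (∑ k, star (Wf k j) * Wf k j) = (1 : H) := by
      have : (Wfᴴ * Wf) j j = 1 := by rw [hWfl, Matrix.one_apply_eq]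
      rw [← this, Matrix.mul_apply]
      exact Finset.sum_congr rfl fun k _ => by rw [Matrix.conjTranspose_apply]
    rw [Finset.sum_congr rfl fun k _ => by rw [congrFun h0 k]] at hq
    simp at hq

lemma assemble {m' n : ℕ} (A : Matrix (Fin (m'+1)) (Fin (n+1)) H)
    (σ : ℝ) (hσ0 : 0 ≤ σ)
    (V₁ : Matrix (Fin (m'+1)) (Fin (m'+1)) H) (W₁ : Matrix (Fin (n+1)) (Fin (n+1)) H)
    (hV₁l : V₁ᴴ * V₁ = 1) (hV₁r : V₁ * V₁ᴴ = 1)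
    (hW₁l : W₁ᴴ * W₁ = 1) (hW₁r : W₁ * W₁ᴴ = 1)
    (A' : Matrix (Fin m') (Fin n) H)
    (hCbd : V₁ᴴ * A * W₁ = bd ((σ:ℝ):H) A')
    (hEig : ∀ (μ : ℝ) (v : Fin (n+1) → H), v ≠ 0 →
      (Aᴴ * A).mulVec v = (fun i => μ • v i) → μ ≤ σ * σ)
    (hgood' : Good A') : Good A := by
  obtain ⟨V', W', S', ⟨hV'l, hV'r⟩, ⟨hW'l, hW'r⟩, hSoff', hSdiag', hSmono', hfac'⟩ := hgood'
  obtain ⟨hVfl, hVfr⟩ := unitary_mul V₁ (bd 1 V') hV₁l hV₁r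
    (by rw [bd_conjTranspose, star_one, bd_mul, one_mul, hV'l, bd_one])
    (by rw [bd_conjTranspose, star_one, bd_mul, one_mul, hV'r, bd_one])
  obtain ⟨hWfl, hWfr⟩ := unitary_mul W₁ (bd 1 W') hW₁l hW₁r
    (by rw [bd_conjTranspose, star_one, bd_mul, one_mul, hW'l, bd_one])
    (by rw [bd_conjTranspose, star_one, bd_mul, one_mul, hW'r, bd_one])
  have hA_C : A = V₁ * bd ((σ:ℝ):H) A' * W₁ᴴ := by
    rw [← hCbd, Matrix.mul_assoc V₁ᴴ A W₁, ← Matrix.mul_assoc V₁ V₁ᴴ (A * W₁), hV₁r,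
      Matrix.one_mul, Matrix.mul_assoc A W₁ W₁ᴴ, hW₁r, Matrix.mul_one]
  have hfac : A = (V₁ * bd 1 V') * bd ((σ:ℝ):H) S' * (W₁ * bd 1 W')ᴴ := by
    rw [conjTranspose_mul W₁ (bd 1 W'), bd_conjTranspose, star_one]
    rw [Matrix.mul_assoc V₁ (bd 1 V') (bd ((σ:ℝ):H) S'), bd_mul, one_mul]
    rw [Matrix.mul_assoc V₁ (bd ((σ:ℝ):H) (V' * S')) ((bd 1 W'ᴴ) * W₁ᴴ),
      ← Matrix.mul_assoc (bd ((σ:ℝ):H) (V' * S')) (bd 1 W'ᴴ) W₁ᴴ, bd_mul, mul_one]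
    rw [← hfac', ← Matrix.mul_assoc V₁ (bd ((σ:ℝ):H) A') W₁ᴴ]
    exact hA_C
  have key : ∀ (i'' : Fin m') (j'' : Fin n), (i'' : ℕ) = (j'' : ℕ) →
      (S' i'' j'').re ≤ σ := by
    intro i'' j'' hd
    obtain ⟨r, hr0, hr⟩ := hSdiag' i'' j'' hd
    obtain ⟨r₀, hr₀0, hr₀⟩ := hSdiag' ⟨0, i''.pos⟩ ⟨0, j''.pos⟩ rfl
    have hrr₀ : r ≤ r₀ := by
      have h := hSmono' ⟨0, i''.pos⟩ i'' ⟨0, j''.pos⟩ j'' rfl hd (Nat.zero_le _)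
      rw [hr, hr₀] at h
      simpa [Quaternion.re_coe] using h
    suffices hr₀σ : r₀ ≤ σ by
      rw [hr, Quaternion.re_coe]
      linarith
    have hcol : ∀ k, ((bd ((σ:ℝ):H) S')ᴴ * (bd ((σ:ℝ):H) S')) k (Fin.succ ⟨0, j''.pos⟩) =
        if k = Fin.succ ⟨0, j''.pos⟩ then ((r₀*r₀ : ℝ):H) else 0 := by
      intro k
      rw [bd_conjTranspose, bd_mul]
      refine Fin.cases ?_ (fun k' => ?_) k
      · rw [bd_zero_succ, if_neg ((Fin.succ_ne_zero (⟨0, j''.pos⟩ : Fin n)).symm)]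
      · rw [bd_succ_succ, Matrix.mul_apply]
        have hz : ∀ p, p ≠ (⟨0, i''.pos⟩ : Fin m') →
            S'ᴴ k' p * S' p ⟨0, j''.pos⟩ = 0 := by
          intro p hp
          have hpne : (p:ℕ) ≠ ((⟨0, j''.pos⟩ : Fin n) : ℕ) := by
            intro hc
            exact hp (Fin.ext (by rw [hc]))
          rw [hSoff' p _ hpne, mul_zero]
        rw [Finset.sum_eq_single (⟨0, i''.pos⟩ : Fin m') (fun p _ hp => hz p hp)
          (fun h => absurd (Finset.mem_univ _) h)]
        rw [Matrix.conjTranspose_apply, hr₀]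
        by_cases hk : k' = (⟨0, j''.pos⟩ : Fin n)
        · subst hk
          rw [if_pos rfl, hr₀, Quaternion.star_coe, ← Quaternion.coe_mul]
        · rw [if_neg (fun hc => hk (Fin.succ_injective _ hc))]
          have hne : ((⟨0, i''.pos⟩ : Fin m') : ℕ) ≠ (k' : ℕ) := by
            intro hc
            exact hk (Fin.ext hc.symm)
          rw [hSoff' _ k' hne, star_zero, zero_mul]
    obtain ⟨heig, hne⟩ := col_eigen A (V₁ * bd 1 V') (W₁ * bd 1 W') (bd ((σ:ℝ):H) S')
      hVfl hWfl hfac (Fin.succ ⟨0, j''.pos⟩) (r₀*r₀) hcol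
    have hb := hEig (r₀*r₀) _ hne heig
    nlinarith [hr₀0, hσ0]
  refine ⟨V₁ * bd 1 V', W₁ * bd 1 W', bd ((σ:ℝ):H) S', ⟨hVfl, hVfr⟩, ⟨hWfl, hWfr⟩,
    ?_, ?_, ?_, hfac⟩
  · intro i j hij
    rcases Fin.eq_zero_or_eq_succ i with rfl | ⟨i1, rfl⟩ <;>
      rcases Fin.eq_zero_or_eq_succ j with rfl | ⟨j1, rfl⟩
    · exact absurd rfl hij
    · exact bd_zero_succ _ _ _
    · exact bd_succ_zero _ _ _
    · rw [bd_succ_succ]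
      exact hSoff' i1 j1 (fun h => hij (by simp [Fin.val_succ, h]))
  · intro i j hij
    rcases Fin.eq_zero_or_eq_succ i with rfl | ⟨i1, rfl⟩ <;>
      rcases Fin.eq_zero_or_eq_succ j with rfl | ⟨j1, rfl⟩
    · exact ⟨σ, hσ0, by rw [bd_zero_zero]⟩
    · exact absurd hij (by simp [Fin.val_succ])
    · exact absurd hij (by simp [Fin.val_succ])
    · obtain ⟨r, h0, he⟩ := hSdiag' i1 j1 (by simpa [Fin.val_succ] using hij)
      exact ⟨r, h0, by rw [bd_succ_succ]; exact he⟩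
  · intro i i' j j' hij hij' hle
    rcases Fin.eq_zero_or_eq_succ i with rfl | ⟨i1, rfl⟩
    · have hj : j = 0 := Fin.ext (by simpa using hij.symm)
      subst hj
      rcases Fin.eq_zero_or_eq_succ i' with rfl | ⟨i1', rfl⟩
      · have hj' : j' = 0 := Fin.ext (by simpa using hij'.symm)
        subst hj'
        exact le_refl _
      · rcases Fin.eq_zero_or_eq_succ j' with rfl | ⟨j1', rfl⟩
        · exact absurd hij' (by simp [Fin.val_succ])
        · rw [bd_succ_succ, bd_zero_zero, Quaternion.re_coe]
          exact key i1' j1' (by simpa [Fin.val_succ] using hij')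
    · rcases Fin.eq_zero_or_eq_succ j with rfl | ⟨j1, rfl⟩
      · exact absurd hij (by simp [Fin.val_succ])
      · rcases Fin.eq_zero_or_eq_succ i' with rfl | ⟨i1', rfl⟩
        · exact absurd hle (by simp [Fin.val_succ])
        · rcases Fin.eq_zero_or_eq_succ j' with rfl | ⟨j1', rfl⟩
          · exact absurd hij' (by simp [Fin.val_succ])
          · rw [bd_succ_succ, bd_succ_succ]
            exact hSmono' i1 i1' j1 j1' (by simpa [Fin.val_succ] using hij)
              (by simpa [Fin.val_succ] using hij') (by simpa [Fin.val_succ] using hle)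

theorem svd_aux : ∀ (n m : ℕ) (A : Matrix (Fin m) (Fin n) H), Good A := by
  intro n
  induction n with
  | zero =>
    intro m A
    exact good_zero A (Matrix.ext fun i j => Fin.elim0 j)
  | succ n ih =>
    intro m A
    match m with
    | 0 => exact good_zero A (Matrix.ext fun i j => Fin.elim0 i)
    | m' + 1 =>
      set B := Aᴴ * A with hBdef
      have hB : Bᴴ = B := by
        rw [hBdef, conjTranspose_mul, conjTranspose_conjTranspose]
      set T := Tlin B with hTdef
      set l := lam T with hldef
      obtain ⟨v₀, hv₀, hTv₀⟩ := exists_eigen_lam T (Tlin_symm B hB)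
      have hinner : ∀ v : E (n+1), ⟪T v, v⟫ = ∑ i, normSq (A.mulVec v i) := fun v =>
        inner_AHA A v
      have hl0 : 0 ≤ l := by
        have h1 := rayleigh_le_lam T v₀ hv₀
        have h2 : (0:ℝ) ≤ ⟪T v₀, v₀⟫ := by
          rw [hinner]
          exact Finset.sum_nonneg fun i _ => Quaternion.normSq_nonneg
        have h3 : (0:ℝ) ≤ ⟪T v₀, v₀⟫ / ‖v₀‖^2 := div_nonneg h2 (sq_nonneg _)
        linarith
      by_cases hl : l = 0
      · -- A = 0 case
        refine good_zero A (Matrix.ext fun i j => ?_)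
        set sj : E (n+1) := WithLp.toLp 2 (Pi.single j 1) with hsj
        have hv : sj ≠ 0 := by
          rw [hsj]
          intro h
          have := congrArg (fun v : E (n+1) => v j) h
          simp at this
        have h1 := rayleigh_le_lam T sj hv
        rw [← hldef, hl] at h1
        have hpos : (0:ℝ) < ‖sj‖^2 := by
          have : ‖sj‖ ≠ 0 := by simpa [norm_eq_zero] using hv
          positivity
        have h2 := (div_le_iff₀ hpos).mp h1
        rw [zero_mul] at h2
        rw [hinner] at h2
        have h3 : ∀ k, A.mulVec sj k = A k j := by
          intro k
          rw [hsj, WithLp.ofLp_toLp]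
          rw [show A.mulVec (Pi.single j 1) = fun k => A k j * 1 from
            Matrix.mulVec_single A j 1]
          exact mul_one _
        have h4 : ∑ k, normSq (A.mulVec sj k) = 0 :=
          le_antisymm h2 (Finset.sum_nonneg fun k _ => Quaternion.normSq_nonneg)
        have h5 := (Finset.sum_eq_zero_iff_of_nonneg
          (fun k _ => Quaternion.normSq_nonneg)).mp h4 i (Finset.mem_univ i)
        rw [h3 i] at h5
        rw [show (0 : Matrix (Fin (m'+1)) (Fin (n+1)) H) i j = 0 from rfl]
        simpa [Quaternion.normSq_eq_zero] using h5
      · have hlpos : 0 < l := lt_of_le_of_ne hl0 (Ne.symm hl)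
        set σ := Real.sqrt l with hσdef
        have hσpos : 0 < σ := Real.sqrt_pos.mpr hlpos
        have hσsq : σ * σ = l := Real.mul_self_sqrt hl0
        have hnv : (0:ℝ) < ‖v₀‖ := by simpa [norm_pos_iff] using hv₀
        set x : E (n+1) := (‖v₀‖⁻¹ : ℝ) • v₀ with hxdef
        have hxnorm : ‖x‖ = 1 := by
          rw [hxdef, norm_smul]
          simp [abs_of_pos (inv_pos.mpr hnv), inv_mul_cancel₀ hnv.ne']
        have hxsq : ∑ i, normSq (x i) = 1 := by
          rw [← norm_sq_E, hxnorm, one_pow]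
        have hqx : qdot x x = 1 := by
          rw [qdot_self, hxsq, Quaternion.coe_one]
        have hTx : T x = l • x := by
          rw [hxdef, _root_.map_smul, hTv₀, ← hldef, smul_comm]
        set u : Fin (m'+1) → H := A.mulVec x with hudef
        have hAHu : Aᴴ.mulVec u = l • x := by
          rw [hudef, Matrix.mulVec_mulVec, ← hBdef, ← Tlin_apply, ← hTdef, hTx]
          rfl
        have husq : ∑ i, normSq (u i) = l := by
          have h1 := inner_AHA A x
          rw [← hBdef, ← hTdef, hTx, real_inner_smul_left, real_inner_self_eq_norm_sq,
            hxnorm] at h1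
          simpa [hudef] using h1.symm
        set y : Fin (m'+1) → H := (σ⁻¹ : ℝ) • u with hydef
        have hqy : qdot y y = 1 := by
          rw [qdot_self]
          have : ∀ i, normSq (y i) = σ⁻¹^2 * normSq (u i) := by
            intro i
            rw [hydef]
            exact Quaternion.normSq_smul _ _
          rw [Finset.sum_congr rfl fun i _ => this i, ← Finset.mul_sum, husq]
          rw [show σ⁻¹^2 * l = 1 by field_simp [hσpos.ne']; rw [sq]; exact hσsq.symm]
          exact Quaternion.coe_one
        have hu_y : u = σ • y := by
          rw [hydef, smul_smul, mul_inv_cancel₀ hσpos.ne', one_smul]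
        have hAHy : Aᴴ.mulVec y = σ • x := by
          rw [hydef, Matrix.mulVec_smul, hAHu, smul_smul]
          rw [show σ⁻¹ * l = σ by field_simp [hσpos.ne']; rw [sq]; exact hσsq.symm]
        obtain ⟨W₁, hW₁l, hW₁r, hW₁col⟩ := exists_unitary_col x hqx
        obtain ⟨V₁, hV₁l, hV₁r, hV₁col⟩ := exists_unitary_col y hqy
        set C := V₁ᴴ * A * W₁ with hCdef
        have hA_C : V₁ * C * W₁ᴴ = A := by
          rw [hCdef, Matrix.mul_assoc V₁ᴴ A W₁, ← Matrix.mul_assoc V₁ V₁ᴴ (A * W₁), hV₁r,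
            Matrix.one_mul, Matrix.mul_assoc A W₁ W₁ᴴ, hW₁r, Matrix.mul_one]
        have hCcol : ∀ i, C i 0 = σ • ((1 : Matrix (Fin (m'+1)) (Fin (m'+1)) H) i 0) := by
          intro i
          rw [hCdef, Matrix.mul_apply]
          rw [Finset.sum_congr rfl fun k _ => by rw [hW₁col k]]
          rw [show (∑ k, (V₁ᴴ * A) i k * x k) = ((V₁ᴴ * A).mulVec x) i from rfl,
            ← Matrix.mulVec_mulVec, ← hudef, hu_y, Matrix.mulVec_smul, Pi.smul_apply]
          congr 1
          rw [← hV₁l, Matrix.mul_apply,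
            show V₁ᴴ.mulVec y i = ∑ p, V₁ᴴ i p * y p from rfl]
          exact Finset.sum_congr rfl fun p _ => by rw [hV₁col p]
        have hCrow : ∀ j, C 0 j = σ • ((1 : Matrix (Fin (n+1)) (Fin (n+1)) H) 0 j) := by
          intro j
          rw [hCdef, Matrix.mul_apply]
          have h0k : ∀ k, (V₁ᴴ * A) 0 k = σ • star (x k) := by
            intro k
            rw [Matrix.mul_apply]
            rw [Finset.sum_congr rfl fun p _ =>
              show V₁ᴴ 0 p * A p k = star (Aᴴ k p * y p) by
                rw [StarMul.star_mul, Matrix.conjTranspose_apply A, star_star,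
                  Matrix.conjTranspose_apply V₁, hV₁col p]]
            rw [← star_sum, show (∑ p, Aᴴ k p * y p) = Aᴴ.mulVec y k from rfl, hAHy,
              Pi.smul_apply, Quaternion.star_smul]
          rw [Finset.sum_congr rfl fun k _ => by rw [h0k k]]
          rw [show (∑ k, (σ • star (x k)) * W₁ k j) = σ • ∑ k, star (x k) * W₁ k j by
            rw [Finset.smul_sum]
            exact Finset.sum_congr rfl fun k _ => smul_mul_assoc σ _ _]
          congr 1
          rw [← hW₁l, Matrix.mul_apply]
          exact Finset.sum_congr rfl fun k _ => by
            rw [Matrix.conjTranspose_apply, hW₁col]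
        set A' : Matrix (Fin m') (Fin n) H := Matrix.of (fun i' j' => C i'.succ j'.succ)
          with hA'def
        have hCbd : C = bd ((σ:ℝ):H) A' := by
          refine Matrix.ext fun i j => ?_
          refine Fin.cases ?_ (fun i' => ?_) i
          · refine Fin.cases ?_ (fun j' => ?_) j
            · rw [hCcol 0, bd_zero_zero, Matrix.one_apply_eq, ← Quaternion.coe_mul_eq_smul,
                mul_one]
            · rw [hCrow _, bd_zero_succ, Matrix.one_apply_ne (Fin.succ_ne_zero j').symm,
                smul_zero]
          · refine Fin.cases ?_ (fun j' => ?_) j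
            · rw [hCcol _, bd_succ_zero, Matrix.one_apply_ne (Fin.succ_ne_zero i'), smul_zero]
            · rw [bd_succ_succ]; rfl
        have hEig : ∀ (μ : ℝ) (v : Fin (n+1) → H), v ≠ 0 →
            (Aᴴ * A).mulVec v = (fun i => μ • v i) → μ ≤ σ * σ := by
          intro μ v hv hBv
          have h1 : T (WithLp.toLp 2 v) = μ • WithLp.toLp 2 v := by
            show WithLp.toLp 2 (B.mulVec v) = μ • WithLp.toLp 2 v
            rw [hBdef, hBv]
            rfl
          have h2 := eigen_le_lam T μ (WithLp.toLp 2 v)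
            (fun h => hv (by simpa using congrArg WithLp.ofLp h)) h1
          rw [← hldef] at h2
          rw [hσsq]
          exact h2
        exact assemble A σ hσpos.le V₁ W₁ hV₁l hV₁r hW₁l hW₁r A'
          (by rw [← hCdef]; exact hCbd) hEig (ih m' A')

end QSVD
end QSVDsec

/-- Singular value decomposition over the quaternions: every `A ∈ ℍ^{m×n}` factors as
`A = V·Σ·Wᴴ` with `V`, `W` unitary and `Σ` a "diagonal" matrix with nonnegative real,
nonincreasing diagonal entries. -/
theorem quaternion_svd (m n : ℕ) (A : Matrix (Fin m) (Fin n) ℍ[ℝ]) :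
    ∃ (V : Matrix (Fin m) (Fin m) ℍ[ℝ]) (W : Matrix (Fin n) (Fin n) ℍ[ℝ])
      (S : Matrix (Fin m) (Fin n) ℍ[ℝ]),
      (Vᴴ * V = 1 ∧ V * Vᴴ = 1) ∧ (Wᴴ * W = 1 ∧ W * Wᴴ = 1) ∧
      (∀ (i : Fin m) (j : Fin n), (i : ℕ) ≠ (j : ℕ) → S i j = 0) ∧
      (∀ (i : Fin m) (j : Fin n), (i : ℕ) = (j : ℕ) →
        ∃ r : ℝ, 0 ≤ r ∧ S i j = (r : ℍ[ℝ])) ∧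
      (∀ (i i' : Fin m) (j j' : Fin n), (i : ℕ) = (j : ℕ) → (i' : ℕ) = (j' : ℕ) →
        (i : ℕ) ≤ (i' : ℕ) → (S i' j').re ≤ (S i j).re) ∧
      A = V * S * Wᴴ := by
  exact QSVD.svd_aux n m A
end

section
/- A square quaternion matrix A ∈ ℍ^{n×n} is Hermitian (Aᴴ = A) if and only if there exist a unitary matrix U ∈ ℍ^{n×n} and real numbers λ₁, …, λₙ such that A = U·D·Uᴴ, where D = diag(λ₁, …, λₙ) is the diagonal quaternion matrix whose diagonal entries are the real numbers λ₁, …, λₙ. -/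
open scoped Quaternion Matrix
open Finset

namespace QHerm

lemma re_sum {α : Type*} (s : Finset α) (f : α → ℍ[ℝ]) :
    (∑ i ∈ s, f i).re = ∑ i ∈ s, (f i).re :=
  by
  induction s using Finset.cons_induction with
  | empty => simp
  | cons a s ha ih => simp [Finset.sum_cons, ih]

lemma smul_eq_coe_mul' (r : ℝ) (a : ℍ[ℝ]) : r • a = (r : ℍ[ℝ]) * a := by
  rw [Algebra.smul_def]; rfl

lemma star_real_smul (r : ℝ) (x : ℍ[ℝ]) : star (r • x) = r • star x := by
  rw [smul_eq_coe_mul', star_mul, Quaternion.star_coe, ← Quaternion.coe_commutes,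
    ← smul_eq_coe_mul']

lemma coe_sum {α : Type*} (s : Finset α) (f : α → ℝ) :
    ((∑ i ∈ s, f i : ℝ) : ℍ[ℝ]) = ∑ i ∈ s, ((f i : ℝ) : ℍ[ℝ]) := by
  induction s using Finset.cons_induction with
  | empty => simp
  | cons a s ha ih => rw [Finset.sum_cons, Finset.sum_cons, ← ih, Quaternion.coe_add]

lemma re_mul_comm (a b : ℍ[ℝ]) : (a * b).re = (b * a).re := by
  simp [Quaternion.re_mul]; ring

lemma coe_mul_comm (r : ℝ) (a : ℍ[ℝ]) : (r : ℍ[ℝ]) * a = a * (r : ℍ[ℝ]) := by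
  rw [← Quaternion.coe_commutes]

lemma exists_eigenvector (n : ℕ) (A : Matrix (Fin (n+1)) (Fin (n+1)) ℍ[ℝ]) (hA : Aᴴ = A) :
    ∃ (μ : ℝ) (v : Fin (n+1) → ℍ[ℝ]), v ≠ 0 ∧ A.mulVec v = fun i => (μ : ℍ[ℝ]) * v i := by
  classical
  let T : PiLp 2 (fun _ : Fin (n+1) => ℍ[ℝ]) →ₗ[ℝ] PiLp 2 (fun _ : Fin (n+1) => ℍ[ℝ]) :=
    { toFun := fun x => WithLp.toLp 2 (A.mulVec x)
      map_add' := fun x y => congrArg (WithLp.toLp 2) (Matrix.mulVec_add A x y)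
      map_smul' := fun r x => congrArg (WithLp.toLp 2) (Matrix.mulVec_smul A r x) }
  have hT : T.IsSymmetric := by
    intro x y
    show @inner ℝ (PiLp 2 (fun _ : Fin (n+1) => ℍ[ℝ])) _ (WithLp.toLp 2 (A.mulVec x)) y = @inner ℝ (PiLp 2 (fun _ : Fin (n+1) => ℍ[ℝ])) _ x (WithLp.toLp 2 (A.mulVec y))
    simp only [PiLp.inner_apply, Quaternion.inner_def, Matrix.mulVec, dotProduct]
    have L : ∀ i : Fin (n+1), ((∑ j, A i j * x j) * star (y i)).re
        = ∑ j, (A i j * x j * star (y i)).re := fun i => by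
      rw [Finset.sum_mul, re_sum]
    have R : ∀ j : Fin (n+1), (x j * star (∑ i, A j i * y i)).re
        = ∑ i, (x j * (star (y i) * star (A j i))).re := fun j => by
      rw [star_sum, Finset.mul_sum, re_sum]
      exact Finset.sum_congr rfl fun i _ => by rw [star_mul]
    simp only [L, R]
    rw [Finset.sum_comm]
    refine Finset.sum_congr rfl fun j _ => Finset.sum_congr rfl fun i _ => ?_
    have hAij : star (A j i) = A i j := by
      have := congrFun (congrFun hA i) j
      rwa [Matrix.conjTranspose_apply] at this
    rw [hAij, re_mul_comm (A i j * x j), re_mul_comm (x j), mul_assoc]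
  have : Nontrivial (PiLp 2 (fun _ : Fin (n+1) => ℍ[ℝ])) := by
    refine ⟨⟨0, (WithLp.toLp 2 (fun _ => (1 : ℍ[ℝ])) : PiLp 2 (fun _ : Fin (n+1) => ℍ[ℝ])), fun h => one_ne_zero (α := ℍ[ℝ]) ?_⟩⟩
    exact (congrFun (congrArg WithLp.ofLp h) 0).symm
  obtain ⟨v, hv⟩ := (hT.hasEigenvalue_iSup_of_finiteDimensional).exists_hasEigenvector
  exact ⟨_, v, fun h => hv.2 (congrArg (WithLp.toLp 2) h), funext fun i =>
    (congrArg (fun z : PiLp 2 (fun _ : Fin (n+1) => ℍ[ℝ]) => WithLp.ofLp z i) hv.apply_eq_smul).trans (smul_eq_coe_mul' _ (v i))⟩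


lemma exists_householder (n : ℕ) (w : Fin (n+1) → ℍ[ℝ])
    (hw : ∑ i, star (w i) * w i = 1) :
    ∃ (H : Matrix (Fin (n+1)) (Fin (n+1)) ℍ[ℝ]) (q : ℍ[ℝ]),
      Hᴴ = H ∧ H * H = 1 ∧ star q * q = 1 ∧ ∀ i, H i 0 = w i * q := by
  classical
  set a := w 0 with ha
  set na := ‖a‖ with hna
  have hns : (Quaternion.normSq a : ℝ) = na * na := by
    rw [Quaternion.normSq_eq_norm_mul_self]
  set q : ℍ[ℝ] := if a = 0 then 1 else ((na⁻¹ : ℝ) : ℍ[ℝ]) * star a with hqdef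
  have hq : star q * q = 1 := by
    rw [Quaternion.star_mul_self]
    by_cases h : a = 0
    · simp [hqdef, h]
    · have hna0 : na ≠ 0 := by simpa [hna] using h
      rw [hqdef, if_neg h, map_mul, Quaternion.normSq_coe, Quaternion.normSq_star, hns]
      rw [show na⁻¹ ^ 2 * (na * na) = 1 by field_simp]
      exact Quaternion.coe_one
  set w' : Fin (n+1) → ℍ[ℝ] := fun i => w i * q with hw'def
  have hw' : ∑ i, star (w' i) * w' i = 1 := by
    have : ∀ i, star (w' i) * w' i = star q * ((star (w i) * w i) * q) := fun i => by
      rw [hw'def]; simp only [star_mul]; noncomm_ring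
    rw [Finset.sum_congr rfl fun i _ => this i, ← Finset.mul_sum, ← Finset.sum_mul, hw,
      one_mul, hq]
  have hw'0 : w' 0 = ((na : ℝ) : ℍ[ℝ]) := by
    by_cases h : a = 0
    · simp [hw'def, ← ha, h, hna]
    · rw [hw'def]
      simp only [← ha]
      rw [hqdef, if_neg h, ← mul_assoc, ← Quaternion.coe_commutes, mul_assoc,
        Quaternion.self_mul_star, ← Quaternion.coe_mul, hns]
      have hna0 : na ≠ 0 := by simpa [hna] using h
      rw [show na⁻¹ * (na * na) = na by field_simp]
  by_cases hna1 : na = 1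
  · -- w' is the standard basis vector e₀; take H = 1
    refine ⟨1, q, by simp, by simp, hq, fun i => ?_⟩
    have h0 : star (w' 0) * w' 0 = 1 := by
      rw [hw'0, hna1]; simp
    rw [Fin.sum_univ_succ, h0] at hw'
    have h1 : ∑ j : Fin n, star (w' j.succ) * w' j.succ = 0 := by
      have : (1:ℍ[ℝ]) + ∑ j : Fin n, star (w' j.succ) * w' j.succ = 1 + 0 := by
        rw [add_zero]; exact hw'
      exact add_left_cancel this
    have hz : ∑ j : Fin n, (Quaternion.normSq (w' j.succ) : ℝ) = 0 := by
      have hre := congrArg QuaternionAlgebra.re h1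
      rw [re_sum] at hre
      simpa [Quaternion.star_mul_self, Quaternion.re_coe] using hre
    have hrest : ∀ j : Fin n, w' j.succ = 0 := fun j =>
      Quaternion.normSq_eq_zero.mp
        ((Finset.sum_eq_zero_iff_of_nonneg (fun i _ => Quaternion.normSq_nonneg)).mp hz
          j (Finset.mem_univ j))
    show (1 : Matrix (Fin (n+1)) (Fin (n+1)) ℍ[ℝ]) i 0 = w' i
    induction i using Fin.cases with
    | zero => rw [hw'0, hna1]; simp [Matrix.one_apply]
    | succ j => simp [hrest j, Matrix.one_apply, Fin.succ_ne_zero j]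
  · -- Householder reflection
    set u : Fin (n+1) → ℍ[ℝ] := fun i => w' i - if i = 0 then 1 else 0 with hu
    have hu0 : u 0 = ((na - 1 : ℝ) : ℍ[ℝ]) := by
      rw [hu]; simp only [if_pos rfl]
      rw [hw'0]; push_cast; ring
    set s : ℝ := 2 - 2 * na with hs
    have hsne : (1 : ℝ) - na ≠ 0 := fun h => hna1 (by linarith)
    have hsum_u : ∑ i, star (u i) * u i = ((s : ℝ) : ℍ[ℝ]) := by
      have expand : ∀ i : Fin (n+1), star (u i) * u i
          = star (w' i) * w' i
            - (if i = 0 then star (w' i) else 0)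
            - (if i = 0 then w' i else 0)
            + (if i = 0 then 1 else 0) := fun i => by
        rw [hu]
        by_cases h : i = 0
        · simp only [h, if_true, reduceIte, star_sub, star_one]
          noncomm_ring
        · simp [h]
      rw [Finset.sum_congr rfl fun i _ => expand i]
      rw [Finset.sum_add_distrib, Finset.sum_sub_distrib, Finset.sum_sub_distrib, hw',
        Finset.sum_ite_eq' Finset.univ (0 : Fin (n+1)) (fun i => star (w' i)),
        Finset.sum_ite_eq' Finset.univ (0 : Fin (n+1)) w',
        Finset.sum_ite_eq' Finset.univ (0 : Fin (n+1)) (fun _ => (1:ℍ[ℝ]))]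
      simp only [Finset.mem_univ, if_pos, hw'0, Quaternion.star_coe]
      rw [hs, show (1:ℍ[ℝ]) = ((1:ℝ):ℍ[ℝ]) from Quaternion.coe_one.symm,
        ← Quaternion.coe_sub, ← Quaternion.coe_sub, ← Quaternion.coe_add]
      exact congrArg _ (by ring)
    set c : ℝ := (1 - na)⁻¹ with hc
    set M : Matrix (Fin (n+1)) (Fin (n+1)) ℍ[ℝ] :=
      Matrix.of fun i j => u i * star (u j) with hM
    have hMsq : M * M = s • M := by
      refine Matrix.ext fun i j => ?_
      rw [Matrix.mul_apply]
      have : ∀ k, (M i k) * (M k j) = u i * ((star (u k) * u k) * star (u j)) := fun k => by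
        show u i * star (u k) * (u k * star (u j)) = _; noncomm_ring
      rw [Finset.sum_congr rfl fun k _ => this k, ← Finset.mul_sum, ← Finset.sum_mul, hsum_u]
      show u i * (((s:ℝ):ℍ[ℝ]) * star (u j)) = s • M i j
      rw [← mul_assoc, ← Quaternion.coe_commutes, mul_assoc]
      rw [show (M : Matrix (Fin (n+1)) (Fin (n+1)) ℍ[ℝ]) i j = u i * star (u j) from rfl]
      rw [smul_eq_coe_mul']
    set H : Matrix (Fin (n+1)) (Fin (n+1)) ℍ[ℝ] := 1 - c • M with hH
    have hHherm : Hᴴ = H := by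
      refine Matrix.ext fun i j => ?_
      show star (H j i) = H i j
      rw [hH]
      show star ((1 : Matrix (Fin (n+1)) (Fin (n+1)) ℍ[ℝ]) j i - c • M j i)
        = (1 : Matrix (Fin (n+1)) (Fin (n+1)) ℍ[ℝ]) i j - c • M i j
      rw [star_sub, star_real_smul]
      congr 1
      · rw [Matrix.one_apply, Matrix.one_apply, apply_ite (star : ℍ[ℝ] → ℍ[ℝ]),
          star_one, star_zero]
        simp [eq_comm]
      · congr 1
        show star (u j * star (u i)) = u i * star (u j)
        rw [star_mul, star_star]
    have hHH : H * H = 1 := by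
      have h2 : (c • M) * (c • M) = (c * c * s) • M := by
        rw [Matrix.smul_mul, Matrix.mul_smul, hMsq, smul_smul, smul_smul]
      have hcs : c * c * s = c + c := by
        rw [hc, hs]; field_simp; ring
      calc H * H = 1 - c • M - (c • M - (c + c) • M) := by
            rw [hH, sub_mul, mul_sub, mul_sub, h2, hcs]
            simp only [mul_one, one_mul]
        _ = 1 := by rw [add_smul]; abel
    refine ⟨H, q, hHherm, hHH, hq, fun i => ?_⟩
    show (1 - c • M) i 0 = w' i
    simp only [Matrix.sub_apply, Matrix.smul_apply, Matrix.one_apply]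
    rw [show (M : Matrix (Fin (n+1)) (Fin (n+1)) ℍ[ℝ]) i 0 = u i * star (u 0) from rfl]
    rw [hu0, Quaternion.star_coe, Quaternion.mul_coe_eq_smul, smul_smul,
      show c * (na - 1) = -1 by rw [hc]; field_simp; ring, neg_one_smul, sub_neg_eq_add]
    rw [hu]
    show (if i = 0 then (1:ℍ[ℝ]) else 0) + (w' i - if i = 0 then 1 else 0) = w' i
    abel

lemma mul_diag_conjT_apply {m : ℕ} (M N : Matrix (Fin m) (Fin m) ℍ[ℝ]) (d : Fin m → ℍ[ℝ])
    (i j : Fin m) :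
    (M * Matrix.diagonal d * Nᴴ) i j = ∑ k, M i k * d k * star (N j k) := by
  rw [Matrix.mul_apply]
  exact Finset.sum_congr rfl fun k _ => by rw [Matrix.mul_diagonal, Matrix.conjTranspose_apply]

lemma diag_main : ∀ (n : ℕ) (A : Matrix (Fin n) (Fin n) ℍ[ℝ]), Aᴴ = A →
    ∃ (U : Matrix (Fin n) (Fin n) ℍ[ℝ]) (lam : Fin n → ℝ),
      (Uᴴ * U = 1 ∧ U * Uᴴ = 1) ∧
      A = U * Matrix.diagonal (fun i => ((lam i : ℝ) : ℍ[ℝ])) * Uᴴ := by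
  intro n
  induction n with
  | zero =>
    intro A hA
    exact ⟨1, fun _ => 0, ⟨by simp, by simp⟩, Subsingleton.elim _ _⟩
  | succ n ih =>
    intro A hA
    classical
    obtain ⟨μ, v, hv0, hAv⟩ := exists_eigenvector n A hA
    -- normalize v
    set t : ℝ := ∑ i, Quaternion.normSq (v i) with ht
    have htpos : 0 < t := by
      obtain ⟨i, hi⟩ := Function.ne_iff.mp hv0
      refine Finset.sum_pos' (fun j _ => Quaternion.normSq_nonneg) ⟨i, Finset.mem_univ i, ?_⟩
      exact lt_of_le_of_ne Quaternion.normSq_nonneg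
        (Ne.symm (Quaternion.normSq_ne_zero.mpr hi))
    set r : ℝ := (Real.sqrt t)⁻¹ with hr
    set w : Fin (n+1) → ℍ[ℝ] := fun i => r • v i with hwdef
    have hAw : ∀ k, ∑ j, A k j * w j = (μ : ℍ[ℝ]) * w k := by
      intro k
      have h1 : ∀ j, A k j * w j = r • (A k j * v j) := fun j => by
        rw [hwdef, mul_smul_comm]
      rw [Finset.sum_congr rfl fun j _ => h1 j, ← Finset.smul_sum]
      have h2 : ∑ j, A k j * v j = (μ : ℍ[ℝ]) * v k := congrFun hAv k
      rw [h2, hwdef, mul_smul_comm]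
    have hw : ∑ i, star (w i) * w i = 1 := by
      have h1 : ∀ i, star (w i) * w i = ((r * r * Quaternion.normSq (v i) : ℝ) : ℍ[ℝ]) :=
        fun i => by
          rw [hwdef, star_real_smul, smul_mul_smul_comm, Quaternion.star_mul_self,
            Quaternion.smul_coe, mul_assoc]
      rw [Finset.sum_congr rfl fun i _ => h1 i, ← coe_sum]
      rw [show ∑ i, r * r * Quaternion.normSq (v i) = r * r * t by
        rw [ht, Finset.mul_sum]]
      rw [hr, show (Real.sqrt t)⁻¹ * (Real.sqrt t)⁻¹ * t = 1 by
        rw [← mul_inv, Real.mul_self_sqrt htpos.le]; field_simp]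
      exact Quaternion.coe_one
    obtain ⟨H, q, hHherm, hHH, hq, hcol⟩ := exists_householder n w hw
    -- the transformed matrix B
    set B : Matrix (Fin (n+1)) (Fin (n+1)) ℍ[ℝ] := H * A * H with hB
    have hBherm : Bᴴ = B := by
      rw [hB, Matrix.conjTranspose_mul, Matrix.conjTranspose_mul, hHherm, hA, Matrix.mul_assoc]
    have hAH : ∀ k, (A * H) k 0 = (μ : ℍ[ℝ]) * H k 0 := by
      intro k
      rw [Matrix.mul_apply]
      rw [Finset.sum_congr rfl fun j _ => by rw [hcol j, ← mul_assoc]]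
      rw [← Finset.sum_mul, hAw k, mul_assoc, ← hcol k]
    have hBcol : ∀ i, B i 0 = (μ : ℍ[ℝ]) * (1 : Matrix (Fin (n+1)) (Fin (n+1)) ℍ[ℝ]) i 0 := by
      intro i
      rw [hB, Matrix.mul_assoc, Matrix.mul_apply]
      have h1 : ∀ k, H i k * (A * H) k 0 = (μ : ℍ[ℝ]) * (H i k * H k 0) := fun k => by
        rw [hAH k, ← mul_assoc, ← Quaternion.coe_commutes, mul_assoc]
      rw [Finset.sum_congr rfl fun k _ => h1 k, ← Finset.mul_sum, ← Matrix.mul_apply, hHH]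
    have hBrow : ∀ j, B 0 j = star (B j 0) := fun j => by
      conv_lhs => rw [← hBherm]
      rfl
    -- the lower-right block
    set C : Matrix (Fin n) (Fin n) ℍ[ℝ] := Matrix.of (fun i j => B i.succ j.succ) with hC
    have hCherm : Cᴴ = C := by
      refine Matrix.ext fun i j => ?_
      show star (B j.succ i.succ) = B i.succ j.succ
      rw [← Matrix.conjTranspose_apply, hBherm]
    obtain ⟨V, lam', ⟨hV1, hV2⟩, hCdec⟩ := ih C hCherm
    set U₂ : Matrix (Fin (n+1)) (Fin (n+1)) ℍ[ℝ] :=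
      Matrix.of (Fin.cons (Fin.cons (1:ℍ[ℝ]) (fun _ => (0:ℍ[ℝ])) : Fin (n+1) → ℍ[ℝ])
        (fun i' => (Fin.cons (0:ℍ[ℝ]) (fun j' => V i' j') : Fin (n+1) → ℍ[ℝ])))
      with hU₂
    have hU₂app0 : ∀ j, U₂ 0 j
        = (Fin.cons (1:ℍ[ℝ]) (fun _ => (0:ℍ[ℝ])) : Fin (n+1) → ℍ[ℝ]) j := fun j => by
      rw [hU₂, Matrix.of_apply, Fin.cons_zero]
    have hU₂apps : ∀ i j, U₂ i.succ j
        = (Fin.cons (0:ℍ[ℝ]) (fun j' => V i j') : Fin (n+1) → ℍ[ℝ]) j := fun i j => by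
      rw [hU₂, Matrix.of_apply, Fin.cons_succ]
    have hU₂1 : U₂ᴴ * U₂ = 1 := by
      refine Matrix.ext fun i j => ?_
      rw [Matrix.mul_apply, Fin.sum_univ_succ]
      simp only [Matrix.conjTranspose_apply, hU₂app0, hU₂apps]
      induction i using Fin.cases with
      | zero =>
        induction j using Fin.cases with
        | zero => simp [Matrix.one_apply]
        | succ j' => simp [Matrix.one_apply, (Fin.succ_ne_zero j').symm]
      | succ i' =>
        induction j using Fin.cases with
        | zero => simp [Matrix.one_apply, Fin.succ_ne_zero i']
        | succ j' =>
          simp only [Fin.cons_succ, Fin.cons_zero, star_zero, zero_mul, zero_add]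
          have h := congrFun (congrFun hV1 i') j'
          rw [Matrix.mul_apply] at h
          simp only [Matrix.conjTranspose_apply] at h
          rw [h]
          simp [Matrix.one_apply, Fin.succ_inj]
    have hU₂2 : U₂ * U₂ᴴ = 1 := by
      refine Matrix.ext fun i j => ?_
      rw [Matrix.mul_apply, Fin.sum_univ_succ]
      simp only [Matrix.conjTranspose_apply, hU₂app0, hU₂apps]
      induction i using Fin.cases with
      | zero =>
        induction j using Fin.cases with
        | zero => simp [hU₂app0, hU₂apps, Matrix.one_apply]
        | succ j' => simp [hU₂app0, hU₂apps, Matrix.one_apply, (Fin.succ_ne_zero j').symm]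
      | succ i' =>
        induction j using Fin.cases with
        | zero => simp [hU₂app0, hU₂apps, Matrix.one_apply, Fin.succ_ne_zero i']
        | succ j' =>
          simp only [hU₂app0, hU₂apps, Fin.cons_succ, Fin.cons_zero, star_zero, mul_zero,
            zero_mul, zero_add]
          have h := congrFun (congrFun hV2 i') j'
          rw [Matrix.mul_apply] at h
          simp only [Matrix.conjTranspose_apply] at h
          rw [h]
          simp [Matrix.one_apply, Fin.succ_inj]
    set lam : Fin (n+1) → ℝ := Fin.cons μ lam' with hlam
    have hBdec : B = U₂ * Matrix.diagonal (fun i => ((lam i : ℝ) : ℍ[ℝ])) * U₂ᴴ := by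
      refine Matrix.ext fun i j => ?_
      rw [mul_diag_conjT_apply, Fin.sum_univ_succ]
      simp only [hU₂app0, hU₂apps, hlam, Fin.cons_zero, Fin.cons_succ]
      induction i using Fin.cases with
      | zero =>
        induction j using Fin.cases with
        | zero =>
          rw [hBcol 0]
          simp [hU₂app0, hU₂apps, Matrix.one_apply]
        | succ j' =>
          rw [hBrow, hBcol j'.succ]
          simp [hU₂app0, hU₂apps, Matrix.one_apply, Fin.succ_ne_zero j']
      | succ i' =>
        induction j using Fin.cases with
        | zero =>
          rw [hBcol i'.succ]
          simp [hU₂app0, hU₂apps, Matrix.one_apply, Fin.succ_ne_zero i']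
        | succ j' =>
          have h := congrFun (congrFun hCdec i') j'
          rw [mul_diag_conjT_apply] at h
          rw [show B i'.succ j'.succ = C i' j' from rfl, h]
          simp only [hU₂app0, hU₂apps, Fin.cons_succ, Fin.cons_zero, star_zero, mul_zero,
            zero_mul, zero_add]
    refine ⟨H * U₂, lam, ⟨?_, ?_⟩, ?_⟩
    · rw [Matrix.conjTranspose_mul, hHherm, Matrix.mul_assoc, ← Matrix.mul_assoc H H U₂,
        hHH, Matrix.one_mul, hU₂1]
    · rw [Matrix.conjTranspose_mul, hHherm, Matrix.mul_assoc, ← Matrix.mul_assoc U₂,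
        hU₂2, Matrix.one_mul, hHH]
    · have hA2 : A = H * B * H := by
        rw [hB]
        calc A = 1 * A * 1 := by rw [Matrix.one_mul, Matrix.mul_one]
          _ = (H * H) * A * (H * H) := by rw [hHH]
          _ = H * (H * A * H) * H := by simp only [Matrix.mul_assoc]
      rw [hA2, hBdec, Matrix.conjTranspose_mul, hHherm]
      simp only [Matrix.mul_assoc]

end QHerm

/-- A square quaternion matrix is Hermitian if and only if it is unitarily diagonalizable
with real diagonal entries: `A = U·D·Uᴴ` where `U` is unitary and `D = diag(λ₁,…,λₙ)` with
`λᵢ ∈ ℝ`. -/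
theorem hermitian_iff_unitarily_diagonalizable (n : ℕ) (A : Matrix (Fin n) (Fin n) ℍ[ℝ]) :
    Aᴴ = A ↔
      ∃ (U : Matrix (Fin n) (Fin n) ℍ[ℝ]) (lam : Fin n → ℝ),
        (Uᴴ * U = 1 ∧ U * Uᴴ = 1) ∧
        A = U * Matrix.diagonal (fun i => (lam i : ℍ[ℝ])) * Uᴴ := by
  constructor
  · intro hA
    exact QHerm.diag_main n A hA
  · rintro ⟨U, lam, ⟨h1, h2⟩, rfl⟩
    have hD : (Matrix.diagonal (fun i => ((lam i : ℝ) : ℍ[ℝ])))ᴴ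
        = Matrix.diagonal (fun i => ((lam i : ℝ) : ℍ[ℝ])) := by
      rw [Matrix.diagonal_conjTranspose]
      exact congrArg Matrix.diagonal (funext fun i => Quaternion.star_coe (lam i))
    simp only [Matrix.conjTranspose_mul, Matrix.conjTranspose_conjTranspose, hD,
      Matrix.mul_assoc]
end

section
/- Every right eigenvalue of a Hermitian quaternion matrix is real: if A ∈ ℍ^{n×n} satisfies Aᴴ = A and λ ∈ ℍ is such that there exists a nonzero vector x ∈ ℍ^n with A·x = x·λ (componentwise, (A·x)ᵢ = xᵢ·λ for all i), then λ is a real quaternion, i.e. its three imaginary parts vanish. -/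
open scoped Quaternion Matrix

/-- Every right eigenvalue of a Hermitian quaternion matrix is real. -/
theorem right_eigenvalue_of_hermitian_is_real (n : ℕ) (A : Matrix (Fin n) (Fin n) ℍ[ℝ])
    (hA : Aᴴ = A) (lam : ℍ[ℝ]) (x : Fin n → ℍ[ℝ]) (hx : x ≠ 0)
    (heig : ∀ i, A.mulVec x i = x i * lam) :
    lam.imI = 0 ∧ lam.imJ = 0 ∧ lam.imK = 0 := by
  set s : ℍ[ℝ] := ∑ i, star (x i) * x i with hs
  set q : ℍ[ℝ] := ∑ i, star (x i) * A.mulVec x i with hq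
  have hqs : star q = q := by
    rw [hq, star_sum]
    simp only [star_mul, star_star, Matrix.mulVec, dotProduct, star_sum, star_mul,
      Finset.sum_mul, Finset.mul_sum]
    rw [Finset.sum_comm]
    refine Finset.sum_congr rfl fun j _ => Finset.sum_congr rfl fun i _ => ?_
    have : star (A i j) = A j i := by
      conv_rhs => rw [← hA]
      rfl
    rw [this, mul_assoc]
  have hqsl : q = s * lam := by
    rw [hq, hs, Finset.sum_mul]
    exact Finset.sum_congr rfl fun i _ => by rw [heig i, mul_assoc]
  have hsr : s = ((∑ i, Quaternion.normSq (x i) : ℝ) : ℍ[ℝ]) := by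
    rw [hs]
    simp_rw [Quaternion.star_mul_self]
    rw [← Quaternion.algebraMap_def]
    exact Eq.symm (map_sum (algebraMap ℝ ℍ[ℝ]) _ _)
  have hsne : s ≠ 0 := by
    rw [hsr]
    have : ∃ i, x i ≠ 0 := by
      by_contra h
      push_neg at h
      exact hx (funext h)
    obtain ⟨i, hi⟩ := this
    have hpos : 0 < ∑ i, Quaternion.normSq (x i) := by
      apply Finset.sum_pos' (fun j _ => Quaternion.normSq_nonneg)
      exact ⟨i, Finset.mem_univ i,
        (Ne.symm (Quaternion.normSq_ne_zero.2 hi)).lt_of_le Quaternion.normSq_nonneg⟩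
    intro h
    exact hpos.ne' (Quaternion.coe_injective h)
  have hstar : star lam = lam := by
    have h1 := hqs
    rw [hqsl, hsr, star_mul, Quaternion.star_coe, ← Quaternion.coe_commutes] at h1
    exact mul_left_cancel₀ (hsr ▸ hsne) h1
  have hI := congrArg QuaternionAlgebra.imI hstar
  have hJ := congrArg QuaternionAlgebra.imJ hstar
  have hK := congrArg QuaternionAlgebra.imK hstar
  simp only [Quaternion.imI_star, Quaternion.imJ_star, Quaternion.imK_star] at hI hJ hK
  refine ⟨by linarith, by linarith, by linarith⟩
end
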